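/- arXiv:1308.5407 — 6 statements merged into one kernel-verified Lean document; each statement's English description precedes it below -/
import Mathlib

section
/- Let (X,d) be a metric space such that for every finite collection of points x_1,…,x_m ∈ X and real coefficients c_1,…,c_m one has Σ_{j,k} c_j c_k e^{-d(x_j,x_k)} ≥ 0. For a finitely supported signed measure μ = Σ_j c_j δ_{x_j} on X write ‖μ‖_W := (Σ_{j,k} c_j c_k e^{-d(x_j,x_k)})^{1/2} and Zμ(x) := Σ_j c_j e^{-d(x,x_j)}. Then for every such μ and all x, y ∈ X one has |Zμ(x)| ≤ ‖μ‖_W and |Zμ(x) − Zμ(y)| ≤ ‖μ‖_W · √(2·d(x,y)). -/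
lemma stmt0_cs {X : Type*} [MetricSpace X]
    (hpos : ∀ (m : ℕ) (x : Fin m → X) (c : Fin m → ℝ),
      0 ≤ ∑ j, ∑ k, c j * c k * Real.exp (-dist (x j) (x k)))
    {m n : ℕ} (x : Fin m → X) (c : Fin m → ℝ) (y : Fin n → X) (b : Fin n → ℝ) :
    (∑ j, ∑ k, c j * b k * Real.exp (-dist (x j) (y k)))^2
      ≤ (∑ j, ∑ k, c j * c k * Real.exp (-dist (x j) (x k)))
        * (∑ j, ∑ k, b j * b k * Real.exp (-dist (y j) (y k))) := by
  set A := ∑ j, ∑ k, c j * c k * Real.exp (-dist (x j) (x k)) with hA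
  set B := ∑ j, ∑ k, c j * b k * Real.exp (-dist (x j) (y k)) with hB
  set C := ∑ j, ∑ k, b j * b k * Real.exp (-dist (y j) (y k)) with hC
  have hsymm : (∑ j, ∑ k, b j * c k * Real.exp (-dist (y j) (x k))) = B := by
    rw [hB, Finset.sum_comm]
    refine Finset.sum_congr rfl fun j _ => Finset.sum_congr rfl fun k _ => ?_
    rw [dist_comm]; ring
  have key : ∀ t : ℝ, 0 ≤ C * (t * t) + (2*B) * t + A := by
    intro t
    have h := hpos (m+n) (Fin.append x y) (Fin.append c (fun i => t * b i))
    simp only [Fin.sum_univ_add, Fin.append_left, Fin.append_right, Finset.sum_add_distrib] at h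
    have e1 : (∑ j, ∑ k, c j * (t * b k) * Real.exp (-dist (x j) (y k))) = t * B := by
      rw [hB, Finset.mul_sum]
      refine Finset.sum_congr rfl fun j _ => ?_
      rw [Finset.mul_sum]
      exact Finset.sum_congr rfl fun k _ => by ring
    have e2 : (∑ j, ∑ k, (t * b j) * c k * Real.exp (-dist (y j) (x k))) = t * B := by
      rw [← hsymm, Finset.mul_sum]
      refine Finset.sum_congr rfl fun j _ => ?_
      rw [Finset.mul_sum]
      exact Finset.sum_congr rfl fun k _ => by ring
    have e3 : (∑ j, ∑ k, (t * b j) * (t * b k) * Real.exp (-dist (y j) (y k))) = t^2 * C := by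
      rw [hC, Finset.mul_sum]
      refine Finset.sum_congr rfl fun j _ => ?_
      rw [Finset.mul_sum]
      exact Finset.sum_congr rfl fun k _ => by ring
    rw [e1, e2, e3, ← hA] at h
    nlinarith [h]
  have hd := discrim_le_zero key
  rw [discrim] at hd
  nlinarith [hd]

/-- Let `(X,d)` be a metric space such that for every finite collection
of points and real coefficients, `∑_{j,k} c_j c_k e^{-d(x_j,x_k)} ≥ 0`.  For a finitely
supported signed measure `μ = ∑_j c_j δ_{x_j}` write
`‖μ‖_W = (∑_{j,k} c_j c_k e^{-d(x_j,x_k)})^{1/2}` and `Zμ(x) = ∑_j c_j e^{-d(x,x_j)}`.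
Then `|Zμ(x)| ≤ ‖μ‖_W` and `|Zμ(x) − Zμ(y)| ≤ ‖μ‖_W · √(2 d(x,y))`. -/
theorem stmt0 {X : Type*} [MetricSpace X]
    (hpos : ∀ (m : ℕ) (x : Fin m → X) (c : Fin m → ℝ),
      0 ≤ ∑ j, ∑ k, c j * c k * Real.exp (-dist (x j) (x k)))
    (m : ℕ) (x : Fin m → X) (c : Fin m → ℝ) (p q : X) :
    |∑ j, c j * Real.exp (-dist p (x j))|
        ≤ Real.sqrt (∑ j, ∑ k, c j * c k * Real.exp (-dist (x j) (x k))) ∧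
    |(∑ j, c j * Real.exp (-dist p (x j))) - ∑ j, c j * Real.exp (-dist q (x j))|
        ≤ Real.sqrt (∑ j, ∑ k, c j * c k * Real.exp (-dist (x j) (x k)))
          * Real.sqrt (2 * dist p q) := by
  set A := ∑ j, ∑ k, c j * c k * Real.exp (-dist (x j) (x k)) with hA
  have hA0 : 0 ≤ A := hpos m x c
  constructor
  · -- first part: take y = ![p], b = ![1]
    have h := stmt0_cs hpos x c (fun _ : Fin 1 => p) (fun _ : Fin 1 => 1)
    simp only [Fin.sum_univ_one, one_mul, mul_one, dist_self, neg_zero, Real.exp_zero] at h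
    have hB : (∑ j, c j * Real.exp (-dist (x j) p)) = ∑ j, c j * Real.exp (-dist p (x j)) := by
      exact Finset.sum_congr rfl fun j _ => by rw [dist_comm]
    rw [hB, ← hA] at h
    calc |∑ j, c j * Real.exp (-dist p (x j))|
        = Real.sqrt ((∑ j, c j * Real.exp (-dist p (x j)))^2) := (Real.sqrt_sq_eq_abs _).symm
      _ ≤ Real.sqrt A := Real.sqrt_le_sqrt h
  · -- second part: take y = ![p,q], b = ![1,-1]
    have h := stmt0_cs hpos x c ![p, q] ![(1:ℝ), -1]
    simp only [Fin.sum_univ_two, Matrix.cons_val_zero, Matrix.cons_val_one, Matrix.head_cons,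
      one_mul, mul_one, mul_neg, neg_mul, neg_neg, dist_self, neg_zero, Real.exp_zero] at h
    have hB : (∑ j, (c j * Real.exp (-dist (x j) p) + -(c j * Real.exp (-dist (x j) q))))
        = (∑ j, c j * Real.exp (-dist p (x j))) - ∑ j, c j * Real.exp (-dist q (x j)) := by
      rw [Finset.sum_add_distrib, Finset.sum_neg_distrib]
      congr 1
      · exact Finset.sum_congr rfl fun j _ => by rw [dist_comm]
      · congr 1; exact Finset.sum_congr rfl fun j _ => by rw [dist_comm]
    rw [hB, ← hA] at h
    have hC : 1 - Real.exp (-dist p q) + (-Real.exp (-dist q p) + 1) ≤ 2 * dist p q := by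
      rw [dist_comm q p]
      have := Real.add_one_le_exp (-dist p q)
      nlinarith [this]
    have h2 : ((∑ j, c j * Real.exp (-dist p (x j))) - ∑ j, c j * Real.exp (-dist q (x j)))^2
        ≤ A * (2 * dist p q) := by
      refine h.trans ?_
      exact mul_le_mul_of_nonneg_left hC hA0
    calc |(∑ j, c j * Real.exp (-dist p (x j))) - ∑ j, c j * Real.exp (-dist q (x j))|
        = Real.sqrt (((∑ j, c j * Real.exp (-dist p (x j))) - ∑ j, c j * Real.exp (-dist q (x j)))^2) :=
          (Real.sqrt_sq_eq_abs _).symm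
      _ ≤ Real.sqrt (A * (2 * dist p q)) := Real.sqrt_le_sqrt h2
      _ = Real.sqrt A * Real.sqrt (2 * dist p q) := Real.sqrt_mul hA0 _
end

section
/- Let A ⊆ ℝⁿ be nonempty and compact and let t ≥ 1, and write tA := { t·a : a ∈ A }. Then |A|/t ≤ |tA| ≤ tⁿ·|A|, where |·| denotes magnitude. -/
open MeasureTheory Real Complex Filter
open scoped ENNReal RealInnerProductSpace

noncomputable section

/-- `ℝⁿ` with the Euclidean metric. -/
abbrev Eu (n : ℕ) := EuclideanSpace ℝ (Fin n)

/-- Fourier transform, normalized as `ĥ(x) = (2π)^{-n/2} ∫ h(y) e^{-i⟨x,y⟩} dy`. -/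
def FT (n : ℕ) (h : Eu n → ℂ) (x : Eu n) : ℂ :=
  (((2 * π) ^ (-(n : ℝ) / 2) : ℝ) : ℂ) *
    ∫ y : Eu n, Complex.exp (-(Complex.I * (⟪x, y⟫ : ℝ))) * h y

/-- Squared Sobolev norm `‖h‖²_{H^{(n+1)/2}}`, valued in `[0,∞]`. -/
def HnormSq (n : ℕ) (h : Eu n → ℂ) : ℝ≥0∞ :=
  ∫⁻ x : Eu n, ENNReal.ofReal ((1 + ‖x‖ ^ 2) ^ (((n : ℝ) + 1) / 2) * ‖FT n h x‖ ^ 2)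

/-- `ωₙ`, the volume of the Euclidean unit ball in `ℝⁿ`. -/
def omegaBall (n : ℕ) : ℝ := π ^ ((n : ℝ) / 2) / Real.Gamma ((n : ℝ) / 2 + 1)

/-- The admissible class `𝒜(A)`: continuous `h ∈ L²` with finite `H^{(n+1)/2}` norm
which are identically `1` on `A`. -/
def Admissible (n : ℕ) (A : Set (Eu n)) (h : Eu n → ℂ) : Prop :=
  Continuous h ∧ MemLp h 2 (volume : Measure (Eu n)) ∧ HnormSq n h < ⊤ ∧ ∀ a ∈ A, h a = 1

/-- The magnitude `|A| = (n!·ωₙ)⁻¹ inf {‖h‖²_{H^{(n+1)/2}} : h ∈ 𝒜(A)}`,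
as an extended nonnegative real. -/
def magnitudeE (n : ℕ) (A : Set (Eu n)) : ℝ≥0∞ :=
  (⨅ h ∈ {h | Admissible n A h}, HnormSq n h) / ENNReal.ofReal (n.factorial * omegaBall n)

/-- The magnitude `|A| = (n!·ωₙ)⁻¹ inf {‖h‖²_{H^{(n+1)/2}} : h ∈ 𝒜(A)}`, as a real number. -/
def magnitude (n : ℕ) (A : Set (Eu n)) : ℝ :=
  (⨅ h ∈ {h | Admissible n A h}, HnormSq n h).toReal / (n.factorial * omegaBall n)

lemma FT_comp_smul (n : ℕ) (h : Eu n → ℂ) {s : ℝ} (hs : 0 < s) (x : Eu n) :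
    FT n (fun y => h (s⁻¹ • y)) x = ((s ^ n : ℝ) : ℂ) * FT n h (s • x) := by
  have key : (∫ y : Eu n, Complex.exp (-(Complex.I * (⟪x, y⟫ : ℝ))) * h (s⁻¹ • y))
      = (s ^ n : ℝ) • ∫ z : Eu n, Complex.exp (-(Complex.I * (⟪s • x, z⟫ : ℝ))) * h z := by
    have H := MeasureTheory.Measure.integral_comp_inv_smul_of_nonneg (volume : Measure (Eu n))
      (fun z => Complex.exp (-(Complex.I * (⟪s • x, z⟫ : ℝ))) * h z) hs.le
    rw [finrank_euclideanSpace_fin] at H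
    rw [← H]
    refine integral_congr_ae (Filter.Eventually.of_forall fun y => ?_)
    have : (⟪s • x, s⁻¹ • y⟫ : ℝ) = ⟪x, y⟫ := by
      rw [real_inner_smul_left, real_inner_smul_right, ← mul_assoc,
        mul_inv_cancel₀ hs.ne', one_mul]
    simp [this]
  unfold FT
  rw [key, Complex.real_smul]
  ring

lemma lintegral_comp_smul' (n : ℕ) (G : Eu n → ℝ≥0∞) {s : ℝ} (hs : 0 < s) :
    ∫⁻ x : Eu n, G (s • x) = ENNReal.ofReal ((s ^ n)⁻¹) * ∫⁻ x : Eu n, G x := by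
  let e := (Homeomorph.smul (isUnit_iff_ne_zero.2 hs.ne').unit
    (α := Eu n)).toMeasurableEquiv
  have hcoe : ⇑e = fun x : Eu n => s • x := by
    ext x i
    simp [e, Units.smul_def, IsUnit.unit_spec]
  have h1 : ∫⁻ x : Eu n, G (s • x) ∂(volume)
      = ∫⁻ y, G y ∂(Measure.map (fun x : Eu n => s • x) volume) := by
    rw [show (fun x : Eu n => s • x) = ⇑e from hcoe.symm,
      MeasureTheory.lintegral_map_equiv G e, hcoe]
  rw [h1, MeasureTheory.Measure.map_addHaar_smul (volume : Measure (Eu n)) hs.ne',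
    lintegral_smul_measure, finrank_euclideanSpace_fin,
    _root_.abs_of_nonneg (inv_nonneg.2 (pow_nonneg hs.le n)), smul_eq_mul]

lemma HnormSq_comp_smul_le (n : ℕ) (h : Eu n → ℂ) {s M : ℝ} (hs : 0 < s) (hM : 0 ≤ M)
    (hw : ∀ x : Eu n, (1 + ‖x‖ ^ 2) ^ (((n : ℝ) + 1) / 2)
      ≤ M * (1 + ‖s • x‖ ^ 2) ^ (((n : ℝ) + 1) / 2)) :
    HnormSq n (fun y => h (s⁻¹ • y)) ≤ ENNReal.ofReal (s ^ n * M) * HnormSq n h := by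
  have hwpos : ∀ x : Eu n, (0:ℝ) ≤ (1 + ‖x‖ ^ 2) ^ (((n : ℝ) + 1) / 2) := fun x =>
    Real.rpow_nonneg (by positivity) _
  have step1 : HnormSq n (fun y => h (s⁻¹ • y))
      ≤ ENNReal.ofReal (s ^ (2 * n) * M) *
        ∫⁻ x : Eu n, ENNReal.ofReal
          ((1 + ‖s • x‖ ^ 2) ^ (((n : ℝ) + 1) / 2) * ‖FT n h (s • x)‖ ^ 2) := by
    rw [← lintegral_const_mul' _ _ ENNReal.ofReal_ne_top]
    unfold HnormSq
    refine lintegral_mono fun x => ?_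
    rw [FT_comp_smul n h hs x, ← ENNReal.ofReal_mul (by positivity)]
    refine ENNReal.ofReal_le_ofReal ?_
    have hnorm : ‖((s ^ n : ℝ) : ℂ) * FT n h (s • x)‖ = s ^ n * ‖FT n h (s • x)‖ := by
      rw [norm_mul, Complex.norm_real, Real.norm_eq_abs,
        _root_.abs_of_nonneg (pow_nonneg hs.le n)]
    rw [hnorm, mul_pow]
    calc (1 + ‖x‖ ^ 2) ^ (((n : ℝ) + 1) / 2) * ((s ^ n) ^ 2 * ‖FT n h (s • x)‖ ^ 2)
        ≤ M * (1 + ‖s • x‖ ^ 2) ^ (((n : ℝ) + 1) / 2) * ((s ^ n) ^ 2 * ‖FT n h (s • x)‖ ^ 2) := by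
          apply mul_le_mul_of_nonneg_right (hw x) (by positivity)
      _ = s ^ (2 * n) * M * ((1 + ‖s • x‖ ^ 2) ^ (((n : ℝ) + 1) / 2) * ‖FT n h (s • x)‖ ^ 2) := by
          rw [mul_comm 2 n, pow_mul]; ring
  have step2 : (∫⁻ x : Eu n, ENNReal.ofReal
        ((1 + ‖s • x‖ ^ 2) ^ (((n : ℝ) + 1) / 2) * ‖FT n h (s • x)‖ ^ 2))
      = ENNReal.ofReal ((s ^ n)⁻¹) * HnormSq n h := by
    exact lintegral_comp_smul' n
      (fun x => ENNReal.ofReal ((1 + ‖x‖ ^ 2) ^ (((n : ℝ) + 1) / 2) * ‖FT n h x‖ ^ 2)) hs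
  calc HnormSq n (fun y => h (s⁻¹ • y))
      ≤ ENNReal.ofReal (s ^ (2 * n) * M) * (ENNReal.ofReal ((s ^ n)⁻¹) * HnormSq n h) := by
        rw [← step2]; exact step1
    _ = ENNReal.ofReal (s ^ n * M) * HnormSq n h := by
        rw [← mul_assoc, ← ENNReal.ofReal_mul (by positivity)]
        congr 2
        rw [two_mul, pow_add]
        field_simp

lemma admissible_comp_smul (n : ℕ) (A : Set (Eu n)) (h : Eu n → ℂ)
    (hh : Admissible n A h) {s M : ℝ} (hs : 0 < s) (hM : 0 ≤ M)
    (hw : ∀ x : Eu n, (1 + ‖x‖ ^ 2) ^ (((n : ℝ) + 1) / 2)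
      ≤ M * (1 + ‖s • x‖ ^ 2) ^ (((n : ℝ) + 1) / 2)) :
    Admissible n ((fun a => s • a) '' A) (fun y => h (s⁻¹ • y)) := by
  obtain ⟨hcont, hL2, hfin, hone⟩ := hh
  refine ⟨hcont.comp (continuous_const_smul _), ?_, ?_, ?_⟩
  · have hmap : Measure.map (fun x : Eu n => s⁻¹ • x) volume
        = ENNReal.ofReal |((s⁻¹) ^ Module.finrank ℝ (Eu n))⁻¹| • volume :=
      MeasureTheory.Measure.map_addHaar_smul _ (inv_ne_zero hs.ne')
    have hL2' : MemLp h 2 (Measure.map (fun x : Eu n => s⁻¹ • x) volume) := by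
      rw [hmap]
      exact hL2.smul_measure ENNReal.ofReal_ne_top
    exact hL2'.comp_of_map (measurable_const_smul _).aemeasurable
  · calc HnormSq n (fun y => h (s⁻¹ • y))
        ≤ ENNReal.ofReal (s ^ n * M) * HnormSq n h := HnormSq_comp_smul_le n h hs hM hw
      _ < ⊤ := ENNReal.mul_lt_top ENNReal.ofReal_lt_top hfin
  · rintro b ⟨a, ha, rfl⟩
    simp only [inv_smul_smul₀ hs.ne']
    exact hone a ha

lemma iInf_le_mul (n : ℕ) (A B : Set (Eu n)) (C : ℝ≥0∞) (hC0 : C ≠ 0) (hCt : C ≠ ⊤)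
    (H : ∀ h, Admissible n A h → ∃ g, Admissible n B g ∧ HnormSq n g ≤ C * HnormSq n h) :
    (⨅ g ∈ {g | Admissible n B g}, HnormSq n g)
      ≤ C * ⨅ h ∈ {h | Admissible n A h}, HnormSq n h := by
  set J := ⨅ g ∈ {g | Admissible n B g}, HnormSq n g with hJ
  have key : J / C ≤ ⨅ h ∈ {h | Admissible n A h}, HnormSq n h := by
    refine le_iInf₂ fun h hh => ?_
    obtain ⟨g, hg, hle⟩ := H h hh
    rw [ENNReal.div_le_iff_le_mul (Or.inl hC0) (Or.inl hCt)]
    calc J ≤ HnormSq n g := iInf₂_le g hg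
      _ ≤ C * HnormSq n h := hle
      _ = HnormSq n h * C := mul_comm _ _
  rw [mul_comm, ← ENNReal.div_le_iff_le_mul (Or.inl hC0) (Or.inl hCt)]
  exact key

lemma weight_up (n : ℕ) {t : ℝ} (ht : 1 ≤ t) (x : Eu n) :
    (1 + ‖x‖ ^ 2) ^ (((n : ℝ) + 1) / 2)
      ≤ 1 * (1 + ‖t • x‖ ^ 2) ^ (((n : ℝ) + 1) / 2) := by
  rw [one_mul]
  apply Real.rpow_le_rpow (by positivity) _ (by positivity)
  have : ‖t • x‖ = |t| * ‖x‖ := by rw [norm_smul, Real.norm_eq_abs]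
  rw [this, _root_.abs_of_nonneg (le_trans zero_le_one ht)]
  nlinarith [norm_nonneg x, sq_nonneg (‖x‖ * (t - 1)), sq_nonneg ‖x‖]

lemma weight_down (n : ℕ) {t : ℝ} (ht : 1 ≤ t) (x : Eu n) :
    (1 + ‖x‖ ^ 2) ^ (((n : ℝ) + 1) / 2)
      ≤ t ^ (n + 1) * (1 + ‖t⁻¹ • x‖ ^ 2) ^ (((n : ℝ) + 1) / 2) := by
  have ht0 : (0:ℝ) < t := lt_of_lt_of_le zero_lt_one ht
  have hns : ‖t⁻¹ • x‖ = t⁻¹ * ‖x‖ := by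
    rw [norm_smul, Real.norm_eq_abs, _root_.abs_of_nonneg (inv_nonneg.2 ht0.le)]
  have hpow : (t ^ 2) ^ (((n : ℝ) + 1) / 2) = t ^ (n + 1) := by
    rw [← Real.rpow_natCast t 2, ← Real.rpow_mul ht0.le]
    have : (2 : ℕ) * (((n : ℝ) + 1) / 2) = ((n + 1 : ℕ) : ℝ) := by push_cast; ring
    rw [this, Real.rpow_natCast]
  calc (1 + ‖x‖ ^ 2) ^ (((n : ℝ) + 1) / 2)
      ≤ (t ^ 2 * (1 + ‖t⁻¹ • x‖ ^ 2)) ^ (((n : ℝ) + 1) / 2) := by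
        apply Real.rpow_le_rpow (by positivity) _ (by positivity)
        rw [hns]
        have h1 : t ^ 2 * (1 + (t⁻¹ * ‖x‖) ^ 2) = t ^ 2 + ‖x‖ ^ 2 := by
          field_simp
        rw [h1]
        nlinarith
    _ = t ^ (n + 1) * (1 + ‖t⁻¹ • x‖ ^ 2) ^ (((n : ℝ) + 1) / 2) := by
        rw [Real.mul_rpow (by positivity) (by positivity), hpow]

/-- For nonempty compact `A ⊆ ℝⁿ` and `t ≥ 1`,
`|A|/t ≤ |tA| ≤ tⁿ·|A|`. -/
theorem stmt5 (n : ℕ) (hn : 1 ≤ n) (A : Set (Eu n)) (hA : A.Nonempty) (hAc : IsCompact A)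
    (t : ℝ) (ht : 1 ≤ t) :
    magnitude n A / t ≤ magnitude n ((fun a => t • a) '' A) ∧
    magnitude n ((fun a => t • a) '' A) ≤ t ^ n * magnitude n A := by
  have ht0 : (0:ℝ) < t := lt_of_lt_of_le zero_lt_one ht
  set I := ⨅ h ∈ {h | Admissible n A h}, HnormSq n h with hIdef
  set J := ⨅ h ∈ {h | Admissible n ((fun a => t • a) '' A) h}, HnormSq n h with hJdef
  have key1 : J ≤ ENNReal.ofReal (t ^ n) * I := by
    refine iInf_le_mul n A _ _ (ENNReal.ofReal_pos.2 (pow_pos ht0 n)).ne'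
      ENNReal.ofReal_ne_top fun h hh => ?_
    refine ⟨fun y => h (t⁻¹ • y), admissible_comp_smul n A h hh ht0 zero_le_one
      (weight_up n ht), ?_⟩
    have := HnormSq_comp_smul_le n h ht0 zero_le_one (weight_up n ht)
    rwa [mul_one] at this
  have key2 : I ≤ ENNReal.ofReal t * J := by
    have himg : (fun a : Eu n => t⁻¹ • a) '' ((fun a => t • a) '' A) = A := by
      rw [Set.image_image]
      simp [inv_smul_smul₀ ht0.ne']
    refine iInf_le_mul n ((fun a => t • a) '' A) A _
      (ENNReal.ofReal_pos.2 ht0).ne' ENNReal.ofReal_ne_top fun g hg => ?_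
    have hs : (0:ℝ) < t⁻¹ := inv_pos.2 ht0
    have hadm := admissible_comp_smul n _ g hg hs (pow_pos ht0 (n+1)).le
      (weight_down n ht)
    have hbound := HnormSq_comp_smul_le n g hs (pow_pos ht0 (n+1)).le
      (weight_down n ht)
    rw [himg] at hadm
    have hfun : (fun y : Eu n => g ((t⁻¹)⁻¹ • y)) = fun y => g (t • y) := by
      simp [inv_inv]
    rw [hfun] at hadm hbound
    refine ⟨fun y => g (t • y), hadm, ?_⟩
    have hco : (t⁻¹) ^ n * t ^ (n + 1) = t := by
      rw [inv_pow, pow_succ]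
      field_simp
    rwa [hco] at hbound
  have hc : (0:ℝ) < (n.factorial : ℝ) * omegaBall n := by
    apply mul_pos (by exact_mod_cast n.factorial_pos)
    apply div_pos (Real.rpow_pos_of_pos Real.pi_pos _)
    exact Real.Gamma_pos_of_pos (by positivity)
  by_cases hI : I = ⊤
  · have hJ : J = ⊤ := by
      by_contra hJ
      exact (ne_top_of_le_ne_top (ENNReal.mul_ne_top ENNReal.ofReal_ne_top hJ) key2) hI
    unfold magnitude
    rw [← hIdef, ← hJdef, hI, hJ]
    simp
  · have hJ : J ≠ ⊤ := ne_top_of_le_ne_top (ENNReal.mul_ne_top ENNReal.ofReal_ne_top hI) key1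
    have r1 : J.toReal ≤ t ^ n * I.toReal := by
      have := ENNReal.toReal_mono (ENNReal.mul_ne_top ENNReal.ofReal_ne_top hI) key1
      rwa [ENNReal.toReal_mul, ENNReal.toReal_ofReal (by positivity)] at this
    have r2 : I.toReal ≤ t * J.toReal := by
      have := ENNReal.toReal_mono (ENNReal.mul_ne_top ENNReal.ofReal_ne_top hJ) key2
      rwa [ENNReal.toReal_mul, ENNReal.toReal_ofReal ht0.le] at this
    unfold magnitude
    rw [← hIdef, ← hJdef]
    constructor
    · rw [div_div, div_le_div_iff₀ (by positivity) hc]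
      calc I.toReal * ((n.factorial : ℝ) * omegaBall n)
          ≤ (t * J.toReal) * ((n.factorial : ℝ) * omegaBall n) :=
            mul_le_mul_of_nonneg_right r2 hc.le
        _ = J.toReal * ((n.factorial : ℝ) * omegaBall n * t) := by ring
    · rw [← mul_div_assoc]
      exact div_le_div_of_nonneg_right r1 hc.le
end
end

section
/- Let (A,d) be a nonempty compact metric space. Then limsup_{t→∞} log|tA|_+ / log t equals the upper Minkowski dimension of A, and liminf_{t→∞} log|tA|_+ / log t equals the lower Minkowski dimension of A (equalities in [0,∞]). -/
set_option maxHeartbeats 1000000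
set_option linter.unusedSectionVars false

open MeasureTheory Filter Metric Classical
open scoped ENNReal Topology

noncomputable section

/-- The maximum diversity `|tA|₊` of a compact metric space `A`: the supremum over Borel
probability measures `μ` on `A` of `(∫∫ e^{-t d(a,b)} dμ dμ)⁻¹`. -/
def maxDiv (A : Type*) [MetricSpace A] [MeasurableSpace A] (t : ℝ) : ℝ≥0∞ :=
  ⨆ μ : ProbabilityMeasure A,
    (∫⁻ a, ∫⁻ b, ENNReal.ofReal (Real.exp (-t * dist a b))
      ∂(μ : Measure A) ∂(μ : Measure A))⁻¹

/-- The covering number `N(A,ε)`: the smallest `m` such that `A` is covered by `m` closed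
balls of radius `ε` centered at points of `A`. -/
def coveringNumber (A : Type*) [MetricSpace A] (ε : ℝ) : ℕ :=
  sInf {m : ℕ | ∃ s : Finset A, s.card = m ∧ ∀ a : A, ∃ c ∈ s, dist a c ≤ ε}

/-- The packing number `M(A,ε)`: the largest `m` such that there are `m` points of `A`
whose closed balls of radius `ε` are pairwise disjoint. -/
def packingNumber (A : Type*) [MetricSpace A] (ε : ℝ) : ℕ :=
  sSup {m : ℕ | ∃ x : Fin m → A, Pairwise fun j k =>
    Disjoint (Metric.closedBall (x j) ε) (Metric.closedBall (x k) ε)}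

/-- The upper Minkowski dimension `limsup_{ε→0⁺} log N(A,ε)/log(1/ε)`, in `[0,∞]`. -/
def upperMinkowski (A : Type*) [MetricSpace A] : ℝ≥0∞ :=
  limsup (fun ε : ℝ =>
    ENNReal.ofReal (Real.log (coveringNumber A ε) / Real.log (1 / ε))) (𝓝[>] 0)

/-- The lower Minkowski dimension `liminf_{ε→0⁺} log N(A,ε)/log(1/ε)`, in `[0,∞]`. -/
def lowerMinkowski (A : Type*) [MetricSpace A] : ℝ≥0∞ :=
  liminf (fun ε : ℝ =>
    ENNReal.ofReal (Real.log (coveringNumber A ε) / Real.log (1 / ε))) (𝓝[>] 0)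

lemma ennreal_sq_sum_le (s : Finset ℕ) (x : ℕ → ℝ≥0∞) (hx : ∀ i ∈ s, x i ≠ ∞) :
    (∑ i ∈ s, x i) ^ 2 ≤ s.card * ∑ i ∈ s, x i ^ 2 := by
  set y : ℕ → ℝ := fun i => (x i).toReal with hy
  have hxy : ∀ i ∈ s, x i = ENNReal.ofReal (y i) := fun i hi =>
    (ENNReal.ofReal_toReal (hx i hi)).symm
  have hynn : ∀ i ∈ s, 0 ≤ y i := fun i _ => ENNReal.toReal_nonneg
  have h1 : ∑ i ∈ s, x i = ENNReal.ofReal (∑ i ∈ s, y i) := by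
    rw [ENNReal.ofReal_sum_of_nonneg hynn]
    exact Finset.sum_congr rfl hxy
  have h2 : ∑ i ∈ s, x i ^ 2 = ENNReal.ofReal (∑ i ∈ s, y i ^ 2) := by
    rw [ENNReal.ofReal_sum_of_nonneg (fun i hi => sq_nonneg _)]
    refine Finset.sum_congr rfl fun i hi => ?_
    rw [hxy i hi, ← ENNReal.ofReal_pow (hynn i hi)]
  rw [h1, h2, ← ENNReal.ofReal_pow (Finset.sum_nonneg hynn),
    ← ENNReal.ofReal_natCast s.card, ← ENNReal.ofReal_mul (by positivity)]
  exact ENNReal.ofReal_le_ofReal (by exact_mod_cast sq_sum_le_card_mul_sum_sq (s := s) (f := y))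


lemma tendsto_linear_sub_log (η c : ℝ) (hη : 0 < η) :
    Tendsto (fun y : ℝ => η * y - c * Real.log y) atTop atTop := by
  have hll : Tendsto (fun y : ℝ => Real.log y / y) atTop (𝓝 0) :=
    Real.isLittleO_log_id_atTop.tendsto_div_nhds_zero
  have h0 : Tendsto (fun y : ℝ => (η - c * (Real.log y / y)) * y) atTop atTop := by
    refine Filter.Tendsto.pos_mul_atTop hη ?_ tendsto_id
    have h1 := (hll.const_mul c)
    have h2 := (tendsto_const_nhds (x := η) (f := atTop)).sub h1
    simpa using h2
  refine h0.congr' ?_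
  filter_upwards [eventually_gt_atTop (0:ℝ)] with y hy
  field_simp



section Aux
variable {A : Type*} [MetricSpace A] [MeasurableSpace A] [BorelSpace A] [CompactSpace A]
  [Nonempty A] {t ε : ℝ}

lemma covers_exists {ε : ℝ} (hε : 0 < ε) :
    ∃ s : Finset A, ∀ a : A, ∃ c ∈ s, dist a c ≤ ε := by
  obtain ⟨t, ht⟩ := (isCompact_univ (X := A)).elim_finite_subcover
    (fun a : A => ball a ε) (fun a => isOpen_ball) (fun a _ => Set.mem_iUnion.2 ⟨a, mem_ball_self hε⟩)
  refine ⟨t, fun a => ?_⟩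
  obtain ⟨c, hc, hac⟩ := Set.mem_iUnion₂.1 (ht (Set.mem_univ a))
  exact ⟨c, hc, le_of_lt hac⟩

lemma coveringNumber_le {ε : ℝ} {s : Finset A} (hs : ∀ a : A, ∃ c ∈ s, dist a c ≤ ε) :
    coveringNumber A ε ≤ s.card := Nat.sInf_le ⟨s, rfl, hs⟩

lemma coveringNumber_spec {ε : ℝ} (hε : 0 < ε) :
    ∃ s : Finset A, s.card = coveringNumber A ε ∧ ∀ a : A, ∃ c ∈ s, dist a c ≤ ε := by
  obtain ⟨s, hs⟩ := covers_exists (A := A) hε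
  have : {m : ℕ | ∃ s : Finset A, s.card = m ∧ ∀ a : A, ∃ c ∈ s, dist a c ≤ ε}.Nonempty :=
    ⟨s.card, ⟨s, rfl, hs⟩⟩
  exact Nat.sInf_mem this

lemma one_le_coveringNumber {ε : ℝ} (hε : 0 < ε) : 1 ≤ coveringNumber A ε := by
  obtain ⟨s, hcard, hs⟩ := coveringNumber_spec (A := A) hε
  obtain ⟨c, hc, -⟩ := hs (Classical.arbitrary A)
  rw [← hcard]
  exact Finset.card_pos.2 ⟨c, hc⟩

lemma sep_card_le {ε : ℝ} (hε : 0 < ε) {S : Finset A}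
    (hS : ∀ c ∈ S, ∀ c' ∈ S, c ≠ c' → 2 * ε < dist c c') :
    S.card ≤ coveringNumber A ε := by
  obtain ⟨s, hcard, hs⟩ := coveringNumber_spec (A := A) hε
  rw [← hcard]
  -- map each point of S to a center within ε; injective
  choose f hf hfd using fun c => hs c
  refine Finset.card_le_card_of_injOn f (fun c hc => hf c) ?_
  intro c hc c' hc' hcc
  by_contra hne
  have := hS c hc c' hc' hne
  have : dist c c' ≤ 2 * ε := by
    calc dist c c' ≤ dist c (f c) + dist c' (f c') := by
          rw [hcc]; exact dist_triangle_right c c' (f c')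
      _ ≤ ε + ε := add_le_add (hfd c) (hfd c')
      _ = 2 * ε := by ring
  linarith [hS c hc c' hc' hne]

lemma exists_maximal_separated {ε : ℝ} (hε : 0 < ε) :
    ∃ S : Finset A, S.Nonempty ∧ (∀ c ∈ S, ∀ c' ∈ S, c ≠ c' → 2 * ε < dist c c') ∧
      coveringNumber A (2 * ε) ≤ S.card := by
  set 𝒮 : Set ℕ := {m : ℕ | ∃ S : Finset A, S.card = m ∧
    ∀ c ∈ S, ∀ c' ∈ S, c ≠ c' → 2 * ε < dist c c'} with h𝒮
  have hne : 𝒮.Nonempty := ⟨1, {Classical.arbitrary A}, Finset.card_singleton _, by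
    intro c hc c' hc' hne
    simp only [Finset.mem_singleton] at hc hc'
    exact absurd (hc.trans hc'.symm) hne⟩
  have hbdd : BddAbove 𝒮 := ⟨coveringNumber A ε, fun m hm => by
    obtain ⟨S, hScard, hSsep⟩ := hm
    exact hScard ▸ sep_card_le hε hSsep⟩
  obtain ⟨S, hScard, hSsep⟩ := Nat.sSup_mem hne hbdd
  have h1S : (1 : ℕ) ∈ 𝒮 := ⟨{Classical.arbitrary A}, Finset.card_singleton _, by
    intro c hc c' hc' hne'
    simp only [Finset.mem_singleton] at hc hc'
    exact absurd (hc.trans hc'.symm) hne'⟩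
  refine ⟨S, ?_, hSsep, ?_⟩
  · rw [← Finset.card_pos, hScard]
    exact lt_of_lt_of_le Nat.one_pos (le_csSup hbdd h1S)
  · -- maximality gives covering at radius 2ε
    have hcov : ∀ a : A, ∃ c ∈ S, dist a c ≤ 2 * ε := by
      intro a
      by_contra hno
      push_neg at hno
      have haS : a ∉ S := fun haS => by
        have := hno a haS
        simp at this
        linarith
      have : (insert a S).card ∈ 𝒮 := by
        refine ⟨insert a S, rfl, ?_⟩
        intro c hc c' hc' hne'
        rcases Finset.mem_insert.1 hc with hc1 | hc1
        · rcases Finset.mem_insert.1 hc' with hc2 | hc2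
          · exact absurd (hc1.trans hc2.symm) hne'
          · rw [hc1]; exact hno c' hc2
        · rcases Finset.mem_insert.1 hc' with hc2 | hc2
          · rw [hc2, dist_comm]; exact hno c hc1
          · exact hSsep c hc1 c' hc2 hne'
      have hle := le_csSup hbdd this
      rw [Finset.card_insert_of_notMem haS, hScard] at hle
      omega
    exact hScard ▸ coveringNumber_le hcov



lemma measK (t : ℝ) :
    Measurable (Function.uncurry fun a b : A => ENNReal.ofReal (Real.exp (-t * dist a b))) := by
  apply Continuous.measurable
  exact ENNReal.continuous_ofReal.comp (Real.continuous_exp.comp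
    ((continuous_const.mul continuous_dist)))

lemma measKa (t : ℝ) (a : A) :
    Measurable fun b : A => ENNReal.ofReal (Real.exp (-t * dist a b)) := by
  apply Continuous.measurable
  exact ENNReal.continuous_ofReal.comp (Real.continuous_exp.comp
    ((continuous_const.mul (continuous_const.dist continuous_id))))

lemma measH (t : ℝ) (ν : Measure A) [SFinite ν] :
    Measurable fun a : A => ∫⁻ b, ENNReal.ofReal (Real.exp (-t * dist a b)) ∂ν :=
  (measK t).lintegral_prod_right'

lemma integral_le_one (ht : 0 ≤ t) (μ : ProbabilityMeasure A) :
    ∫⁻ a, ∫⁻ b, ENNReal.ofReal (Real.exp (-t * dist a b))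
      ∂(μ : Measure A) ∂(μ : Measure A) ≤ 1 := by
  calc ∫⁻ a, ∫⁻ b, ENNReal.ofReal (Real.exp (-t * dist a b)) ∂(μ : Measure A) ∂(μ : Measure A)
      ≤ ∫⁻ _, ∫⁻ _, 1 ∂(μ : Measure A) ∂(μ : Measure A) := by
        refine lintegral_mono fun a => lintegral_mono fun b => ?_
        rw [← ENNReal.ofReal_one]
        exact ENNReal.ofReal_le_ofReal (Real.exp_le_one_iff.2 (by
          have := dist_nonneg (x := a) (y := b); nlinarith))
    _ = 1 := by simp

lemma one_le_maxDiv (ht : 0 ≤ t) : 1 ≤ maxDiv A t := by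
  have μ : ProbabilityMeasure A := ⟨Measure.dirac (Classical.arbitrary A), inferInstance⟩
  calc (1 : ℝ≥0∞) = 1⁻¹ := by rw [inv_one]
    _ ≤ (∫⁻ a, ∫⁻ b, ENNReal.ofReal (Real.exp (-t * dist a b))
        ∂(μ : Measure A) ∂(μ : Measure A))⁻¹ := ENNReal.inv_le_inv' (integral_le_one ht μ)
    _ ≤ maxDiv A t := le_iSup (fun μ : ProbabilityMeasure A =>
        (∫⁻ a, ∫⁻ b, ENNReal.ofReal (Real.exp (-t * dist a b))
          ∂(μ : Measure A) ∂(μ : Measure A))⁻¹) μ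

lemma maxDiv_le_exp (ht : 0 ≤ t) :
    maxDiv A t ≤ ENNReal.ofReal (Real.exp (t * diam (Set.univ : Set A))) := by
  refine iSup_le fun μ => ?_
  have hbd : Bornology.IsBounded (Set.univ : Set A) := isCompact_univ.isBounded
  have hlow : ENNReal.ofReal (Real.exp (-(t * diam (Set.univ : Set A)))) ≤
      ∫⁻ a, ∫⁻ b, ENNReal.ofReal (Real.exp (-t * dist a b))
        ∂(μ : Measure A) ∂(μ : Measure A) := by
    calc ENNReal.ofReal (Real.exp (-(t * diam (Set.univ : Set A))))
        = ∫⁻ _, ∫⁻ _, ENNReal.ofReal (Real.exp (-(t * diam (Set.univ : Set A))))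
            ∂(μ : Measure A) ∂(μ : Measure A) := by simp
      _ ≤ _ := by
          refine lintegral_mono fun a => lintegral_mono fun b => ?_
          refine ENNReal.ofReal_le_ofReal (Real.exp_le_exp.2 ?_)
          have hd : dist a b ≤ diam (Set.univ : Set A) :=
            dist_le_diam_of_mem hbd (Set.mem_univ a) (Set.mem_univ b)
          nlinarith
  calc (∫⁻ a, ∫⁻ b, ENNReal.ofReal (Real.exp (-t * dist a b))
        ∂(μ : Measure A) ∂(μ : Measure A))⁻¹
      ≤ (ENNReal.ofReal (Real.exp (-(t * diam (Set.univ : Set A)))))⁻¹ :=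
        ENNReal.inv_le_inv' hlow
    _ = ENNReal.ofReal (Real.exp (t * diam (Set.univ : Set A))) := by
        rw [← ENNReal.ofReal_inv_of_pos (Real.exp_pos _), ← Real.exp_neg, neg_neg]



lemma maxDiv_le_cov (ht : 0 ≤ t) (hε : 0 < ε) :
    maxDiv A t ≤ (coveringNumber A ε : ℝ≥0∞) * ENNReal.ofReal (Real.exp (2 * t * ε)) := by
  obtain ⟨s, hcard, hcov⟩ := coveringNumber_spec (A := A) hε
  set n := coveringNumber A ε with hn
  have hn1 : 1 ≤ n := one_le_coveringNumber (A := A) hε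
  set L := s.toList with hL
  have hLlen : L.length = n := by rw [hL, Finset.length_toList, hcard]
  set c : ℝ≥0∞ := ENNReal.ofReal (Real.exp (-(2 * t * ε))) with hc
  have hc0 : c ≠ 0 := by simp [hc, Real.exp_pos]
  have hctop : c ≠ ∞ := ENNReal.ofReal_ne_top
  set Q : ℕ → Set A := fun k => if h : k < n then closedBall (L.getD k (Classical.arbitrary A)) ε else ∅ with hQ
  have hQmeas : ∀ k, MeasurableSet (Q k) := by
    intro k; rw [hQ]; dsimp only; split
    · exact measurableSet_closedBall
    · exact MeasurableSet.empty
  have hQempty : ∀ k, n ≤ k → Q k = ∅ := by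
    intro k hk; rw [hQ]; dsimp only; rw [dif_neg (by omega)]
  have hQdiam : ∀ k, ∀ a ∈ Q k, ∀ b ∈ Q k, dist a b ≤ 2 * ε := by
    intro k a ha b hb
    rw [hQ] at ha hb; dsimp only at ha hb
    by_cases h : k < n
    · rw [dif_pos h] at ha hb
      rw [mem_closedBall] at ha hb
      calc dist a b ≤ dist a (L.getD k (Classical.arbitrary A)) +
            dist (L.getD k (Classical.arbitrary A)) b := dist_triangle _ _ _
        _ ≤ ε + ε := add_le_add ha (dist_comm _ b ▸ hb)
        _ = 2 * ε := by ring
    · rw [dif_neg h] at ha; exact absurd ha (Set.notMem_empty a)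
  have hQcov : (⋃ k, Q k) = Set.univ := by
    refine Set.eq_univ_of_forall fun a => ?_
    obtain ⟨x, hx, hax⟩ := hcov a
    have hxL : x ∈ L := Finset.mem_toList.2 hx
    obtain ⟨i, hi, hix⟩ := List.mem_iff_getElem.1 hxL
    refine Set.mem_iUnion.2 ⟨i, ?_⟩
    rw [hQ]; dsimp only
    rw [dif_pos (hLlen ▸ hi)]
    rw [mem_closedBall, List.getD_eq_getElem L _ hi, hix]
    exact hax
  refine iSup_le fun μ => ?_
  set ν : Measure A := (μ : Measure A) with hν
  haveI : IsProbabilityMeasure ν := μ.2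
  set K : A → A → ℝ≥0∞ := fun a b => ENNReal.ofReal (Real.exp (-t * dist a b)) with hK
  set H : A → ℝ≥0∞ := fun a => ∫⁻ b, K a b ∂ν with hH
  have hHmeas : Measurable H := (measK t).lintegral_prod_right'
  set D : ℕ → Set A := disjointed Q with hD
  have hDmeas : ∀ k, MeasurableSet (D k) := MeasurableSet.disjointed hQmeas
  have hDdisj : Pairwise (Function.onFun Disjoint D) := disjoint_disjointed Q
  have hDsub : ∀ k, D k ⊆ Q k := disjointed_subset Q
  have hDunion : (⋃ k, D k) = Set.univ := by rw [hD, iUnion_disjointed, hQcov]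
  have hDempty : ∀ k, k ∉ Finset.range n → D k = ∅ := fun k hk =>
    Set.subset_eq_empty ((hDsub k).trans (hQempty k (by simpa using hk)).le) rfl
  -- sum of masses is 1
  have hsum1 : ∑ k ∈ Finset.range n, ν (D k) = 1 := by
    have h1 : ∑' k, ν (D k) = 1 := by
      rw [← measure_iUnion hDdisj hDmeas, hDunion, measure_univ]
    rw [← h1]
    exact (tsum_eq_sum (fun k hk => by rw [hDempty k hk, measure_empty])).symm
  -- lower bound of double integral
  have hmain : c * (n : ℝ≥0∞)⁻¹ ≤ ∫⁻ a, H a ∂ν := by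
    have hstep : ∀ k, c * ν (D k) * ν (D k) ≤ ∫⁻ a in D k, H a ∂ν := by
      intro k
      have hinner : ∀ a ∈ D k, c * ν (D k) ≤ H a := by
        intro a ha
        calc c * ν (D k) = ∫⁻ _ in D k, c ∂ν := (setLIntegral_const _ _).symm
          _ ≤ ∫⁻ b in D k, K a b ∂ν := by
              refine setLIntegral_mono (measKa t a) fun b hb => ?_
              refine ENNReal.ofReal_le_ofReal (Real.exp_le_exp.2 ?_)
              have := hQdiam k a (hDsub k ha) b (hDsub k hb)
              nlinarith
          _ ≤ H a := setLIntegral_le_lintegral _ _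
      calc c * ν (D k) * ν (D k) = ∫⁻ _ in D k, c * ν (D k) ∂ν :=
            (setLIntegral_const _ _).symm
        _ ≤ ∫⁻ a in D k, H a ∂ν := setLIntegral_mono hHmeas hinner
    have hsplit : ∑ k ∈ Finset.range n, ∫⁻ a in D k, H a ∂ν ≤ ∫⁻ a, H a ∂ν := by
      have : ∫⁻ a, H a ∂ν = ∑' k, ∫⁻ a in D k, H a ∂ν := by
        rw [← lintegral_iUnion hDmeas hDdisj, hDunion, setLIntegral_univ]
      rw [this]
      exact ENNReal.sum_le_tsum _
    have hCS : (n : ℝ≥0∞)⁻¹ ≤ ∑ k ∈ Finset.range n, ν (D k) * ν (D k) := by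
      have hfin : ∀ k ∈ Finset.range n, ν (D k) ≠ ∞ := fun k _ => measure_ne_top ν _
      have h2 := ennreal_sq_sum_le (Finset.range n) (fun k => ν (D k)) hfin
      rw [hsum1, one_pow, Finset.card_range] at h2
      have hn0 : (n : ℝ≥0∞) ≠ 0 := by exact_mod_cast (Nat.one_le_iff_ne_zero.1 hn1)
      have hntop : (n : ℝ≥0∞) ≠ ∞ := ENNReal.natCast_ne_top n
      calc (n : ℝ≥0∞)⁻¹ = (n : ℝ≥0∞)⁻¹ * 1 := (mul_one _).symm
        _ ≤ (n : ℝ≥0∞)⁻¹ * ((n : ℝ≥0∞) * ∑ k ∈ Finset.range n, ν (D k) ^ 2) := by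
            exact mul_le_mul_right h2 _
        _ = ∑ k ∈ Finset.range n, ν (D k) ^ 2 := by
            rw [← mul_assoc, ENNReal.inv_mul_cancel hn0 hntop, one_mul]
        _ = ∑ k ∈ Finset.range n, ν (D k) * ν (D k) := by
            refine Finset.sum_congr rfl fun k _ => sq (ν (D k)) ▸ rfl
    calc c * (n : ℝ≥0∞)⁻¹ ≤ c * ∑ k ∈ Finset.range n, ν (D k) * ν (D k) :=
          mul_le_mul_right hCS c
      _ = ∑ k ∈ Finset.range n, c * ν (D k) * ν (D k) := by
          rw [Finset.mul_sum]; exact Finset.sum_congr rfl fun k _ => (mul_assoc _ _ _).symm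
      _ ≤ ∑ k ∈ Finset.range n, ∫⁻ a in D k, H a ∂ν := Finset.sum_le_sum fun k _ => hstep k
      _ ≤ ∫⁻ a, H a ∂ν := hsplit
  calc (∫⁻ a, ∫⁻ b, ENNReal.ofReal (Real.exp (-t * dist a b)) ∂ν ∂ν)⁻¹
      = (∫⁻ a, H a ∂ν)⁻¹ := rfl
    _ ≤ (c * (n : ℝ≥0∞)⁻¹)⁻¹ := ENNReal.inv_le_inv' hmain
    _ = (n : ℝ≥0∞) * c⁻¹ := by
        rw [ENNReal.mul_inv (Or.inl hc0) (Or.inl hctop), inv_inv, mul_comm]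
    _ = (n : ℝ≥0∞) * ENNReal.ofReal (Real.exp (2 * t * ε)) := by
        rw [hc, ← ENNReal.ofReal_inv_of_pos (Real.exp_pos _), ← Real.exp_neg, neg_neg]



lemma cov_le_maxDiv (ht : 0 ≤ t) (hε : 0 < ε) :
    ∃ M : ℕ, 1 ≤ M ∧ coveringNumber A (2 * ε) ≤ M ∧
      (ENNReal.ofReal (1 / M + Real.exp (-(2 * t * ε))))⁻¹ ≤ maxDiv A t := by
  obtain ⟨S, hSne, hSsep, hScov⟩ := exists_maximal_separated (A := A) hε
  set M := S.card with hM
  have hM1 : 1 ≤ M := Finset.card_pos.2 hSne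
  have hM0 : (M : ℝ≥0∞) ≠ 0 := by exact_mod_cast Nat.one_le_iff_ne_zero.1 hM1
  have hMtop : (M : ℝ≥0∞) ≠ ∞ := ENNReal.natCast_ne_top M
  set e' : ℝ≥0∞ := ENNReal.ofReal (Real.exp (-(2 * t * ε))) with he'
  set ν : Measure A := (M : ℝ≥0∞)⁻¹ • ∑ c ∈ S, Measure.dirac c with hν
  have hνuniv : ν Set.univ = 1 := by
    rw [hν, Measure.smul_apply, smul_eq_mul]
    have : (∑ c ∈ S, Measure.dirac c) Set.univ = ∑ c ∈ S, (1 : ℝ≥0∞) := by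
      rw [Measure.finset_sum_apply]
      exact Finset.sum_congr rfl fun c _ => by simp
    rw [this, Finset.sum_const, nsmul_eq_mul, mul_one, ENNReal.inv_mul_cancel hM0 hMtop]
  haveI hprob : IsProbabilityMeasure ν := ⟨hνuniv⟩
  set μP : ProbabilityMeasure A := ⟨ν, hprob⟩ with hμP
  set K : A → A → ℝ≥0∞ := fun a b => ENNReal.ofReal (Real.exp (-t * dist a b)) with hK
  set H : A → ℝ≥0∞ := fun a => ∫⁻ b, K a b ∂ν with hH
  have hHmeas : Measurable H := (measK t).lintegral_prod_right'
  have hHval : ∀ a : A, H a = (M : ℝ≥0∞)⁻¹ * ∑ c ∈ S, K a c := by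
    intro a
    rw [hH]; dsimp only
    rw [hν, lintegral_smul_measure, lintegral_finset_sum_measure]
    congr 1
    exact Finset.sum_congr rfl fun c _ => lintegral_dirac' c (measKa t a)
  have hHbound : ∀ c ∈ S, H c ≤ (M : ℝ≥0∞)⁻¹ * (1 + M * e') := by
    intro c hc
    rw [hHval c]
    refine mul_le_mul_right ?_ _
    have hsplit : ∑ c' ∈ S, K c c' = K c c + ∑ c' ∈ S.erase c, K c c' :=
      (Finset.add_sum_erase S (K c) hc).symm
    rw [hsplit]
    have h1 : K c c = 1 := by
      rw [hK]; dsimp only; rw [dist_self, mul_zero, Real.exp_zero, ENNReal.ofReal_one]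
    have h2 : ∑ c' ∈ S.erase c, K c c' ≤ M * e' := by
      calc ∑ c' ∈ S.erase c, K c c' ≤ ∑ _c' ∈ S.erase c, e' := by
            refine Finset.sum_le_sum fun c' hc' => ?_
            rw [hK]; dsimp only
            refine ENNReal.ofReal_le_ofReal (Real.exp_le_exp.2 ?_)
            have hne : c ≠ c' := (Finset.ne_of_mem_erase hc').symm
            have := hSsep c hc c' (Finset.mem_of_mem_erase hc') hne
            nlinarith
        _ = (S.erase c).card * e' := by rw [Finset.sum_const, nsmul_eq_mul]
        _ ≤ M * e' := by
            refine mul_le_mul_left ?_ _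
            exact_mod_cast Nat.cast_le.2 (Finset.card_erase_le.trans le_rfl)
    rw [h1]
    exact add_le_add le_rfl h2
  have hint : ∫⁻ a, H a ∂ν ≤ ENNReal.ofReal (1 / M + Real.exp (-(2 * t * ε))) := by
    have hout : ∫⁻ a, H a ∂ν = (M : ℝ≥0∞)⁻¹ * ∑ c ∈ S, H c := by
      rw [hν, lintegral_smul_measure, lintegral_finset_sum_measure]
      congr 1
      exact Finset.sum_congr rfl fun c _ => lintegral_dirac' c hHmeas
    rw [hout]
    calc (M : ℝ≥0∞)⁻¹ * ∑ c ∈ S, H c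
        ≤ (M : ℝ≥0∞)⁻¹ * ∑ _c ∈ S, (M : ℝ≥0∞)⁻¹ * (1 + M * e') :=
          mul_le_mul_right (Finset.sum_le_sum hHbound) _
      _ = (M : ℝ≥0∞)⁻¹ * (M * ((M : ℝ≥0∞)⁻¹ * (1 + M * e'))) := by
          rw [Finset.sum_const, nsmul_eq_mul]
      _ = ((M : ℝ≥0∞)⁻¹ * M) * ((M : ℝ≥0∞)⁻¹ * (1 + M * e')) := by ring
      _ = (M : ℝ≥0∞)⁻¹ * (1 + M * e') := by
          rw [ENNReal.inv_mul_cancel hM0 hMtop, one_mul]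
      _ = (M : ℝ≥0∞)⁻¹ + e' := by
          rw [mul_add, mul_one, ← mul_assoc, ENNReal.inv_mul_cancel hM0 hMtop, one_mul]
      _ = ENNReal.ofReal (1 / M + Real.exp (-(2 * t * ε))) := by
          rw [ENNReal.ofReal_add (by positivity) (Real.exp_pos _).le]
          congr 1
          rw [one_div, ENNReal.ofReal_inv_of_pos (by exact_mod_cast hM1),
            ENNReal.ofReal_natCast]
  refine ⟨M, hM1, hScov, ?_⟩
  calc (ENNReal.ofReal (1 / M + Real.exp (-(2 * t * ε))))⁻¹
      ≤ (∫⁻ a, ∫⁻ b, ENNReal.ofReal (Real.exp (-t * dist a b)) ∂(μP : Measure A)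
          ∂(μP : Measure A))⁻¹ := ENNReal.inv_le_inv' hint
    _ ≤ maxDiv A t := le_iSup (fun μ : ProbabilityMeasure A =>
        (∫⁻ a, ∫⁻ b, ENNReal.ofReal (Real.exp (-t * dist a b))
          ∂(μ : Measure A) ∂(μ : Measure A))⁻¹) μP



lemma maxDiv_ne_top (ht : 0 ≤ t) : maxDiv A t ≠ ∞ :=
  ne_top_of_le_ne_top ENNReal.ofReal_ne_top (maxDiv_le_exp (A := A) ht)

lemma one_le_maxDiv_toReal (ht : 0 ≤ t) : 1 ≤ (maxDiv A t).toReal := by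
  have := ENNReal.toReal_mono (maxDiv_ne_top (A := A) ht) (one_le_maxDiv (A := A) ht)
  simpa using this

lemma ell_nonneg (ht : 0 ≤ t) : 0 ≤ Real.log (maxDiv A t).toReal :=
  Real.log_nonneg (one_le_maxDiv_toReal ht)

lemma ell_le (ht : 0 ≤ t) (hε : 0 < ε) :
    Real.log (maxDiv A t).toReal ≤ Real.log (coveringNumber A ε) + 2 * t * ε := by
  have hN1 : 1 ≤ coveringNumber A ε := one_le_coveringNumber (A := A) hε
  have hN0 : (0 : ℝ) < (coveringNumber A ε : ℝ) := by exact_mod_cast hN1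
  have h := maxDiv_le_cov (A := A) ht hε
  have hrhs : ((coveringNumber A ε : ℝ≥0∞) * ENNReal.ofReal (Real.exp (2 * t * ε))) ≠ ∞ :=
    ENNReal.mul_ne_top (ENNReal.natCast_ne_top _) ENNReal.ofReal_ne_top
  have h2 : (maxDiv A t).toReal ≤ (coveringNumber A ε : ℝ) * Real.exp (2 * t * ε) := by
    have := ENNReal.toReal_mono hrhs h
    rwa [ENNReal.toReal_mul, ENNReal.toReal_natCast,
      ENNReal.toReal_ofReal (Real.exp_pos _).le] at this
  calc Real.log (maxDiv A t).toReal
      ≤ Real.log ((coveringNumber A ε : ℝ) * Real.exp (2 * t * ε)) := by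
        refine Real.log_le_log ?_ h2
        linarith [one_le_maxDiv_toReal (A := A) ht]
    _ = Real.log (coveringNumber A ε) + 2 * t * ε := by
        rw [Real.log_mul (ne_of_gt hN0) (Real.exp_pos _).ne', Real.log_exp]

lemma le_ell (ht : 0 ≤ t) (hε : 0 < ε) :
    min (Real.log (coveringNumber A (2 * ε))) (2 * t * ε) - Real.log 2
      ≤ Real.log (maxDiv A t).toReal := by
  obtain ⟨M, hM1, hMcov, hMle⟩ := cov_le_maxDiv (A := A) ht hε
  have hM0 : (0 : ℝ) < (M : ℝ) := by exact_mod_cast hM1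
  set x : ℝ := 1 / M + Real.exp (-(2 * t * ε)) with hx
  have hx0 : 0 < x := by positivity
  have h2 : x⁻¹ ≤ (maxDiv A t).toReal := by
    rw [← ENNReal.ofReal_le_iff_le_toReal (maxDiv_ne_top (A := A) ht),
      ENNReal.ofReal_inv_of_pos hx0]
    exact hMle
  have h3 : -Real.log x ≤ Real.log (maxDiv A t).toReal := by
    rw [← Real.log_inv]
    exact Real.log_le_log (by positivity) h2
  refine le_trans ?_ h3
  have hNM : Real.log (coveringNumber A (2 * ε)) ≤ Real.log M := by
    refine Real.log_le_log ?_ (by exact_mod_cast hMcov)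
    exact_mod_cast one_le_coveringNumber (A := A) (by linarith)
  rcases le_total ((1 : ℝ) / M) (Real.exp (-(2 * t * ε))) with hcase | hcase
  · -- x ≤ 2 * exp(-(2tε)) : -log x ≥ 2tε - log 2
    have hxle : x ≤ 2 * Real.exp (-(2 * t * ε)) := by rw [hx]; linarith
    have hlog : Real.log x ≤ Real.log 2 + -(2 * t * ε) := by
      calc Real.log x ≤ Real.log (2 * Real.exp (-(2 * t * ε))) := Real.log_le_log hx0 hxle
        _ = Real.log 2 + -(2 * t * ε) := by
            rw [Real.log_mul two_ne_zero (Real.exp_pos _).ne', Real.log_exp]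
    have : 2 * t * ε - Real.log 2 ≤ -Real.log x := by linarith
    exact le_trans (by simp [min_le_right]) this
  · have hxle : x ≤ 2 * (1 / M) := by rw [hx]; linarith
    have hlog : Real.log x ≤ Real.log 2 + -Real.log M := by
      calc Real.log x ≤ Real.log (2 * (1 / M)) := Real.log_le_log hx0 hxle
        _ = Real.log 2 + -Real.log M := by
            rw [Real.log_mul two_ne_zero (by positivity), one_div, Real.log_inv]
    have : Real.log M - Real.log 2 ≤ -Real.log x := by linarith
    refine le_trans ?_ this
    have := min_le_left (Real.log (coveringNumber A (2 * ε))) (2 * t * ε)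
    linarith



theorem maxDiv_limsup_liminf :
    (limsup (fun t : ℝ => ENNReal.ofReal (Real.log (maxDiv A t).toReal / Real.log t)) atTop
      = limsup (fun ε : ℝ =>
          ENNReal.ofReal (Real.log (coveringNumber A ε) / Real.log (1 / ε))) (𝓝[>] 0)) ∧
    (liminf (fun t : ℝ => ENNReal.ofReal (Real.log (maxDiv A t).toReal / Real.log t)) atTop
      = liminf (fun ε : ℝ =>
          ENNReal.ofReal (Real.log (coveringNumber A ε) / Real.log (1 / ε))) (𝓝[>] 0)) := by
  set F : ℝ → ℝ≥0∞ :=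
    fun t => ENNReal.ofReal (Real.log (maxDiv A t).toReal / Real.log t) with hF
  set G : ℝ → ℝ≥0∞ :=
    fun ε => ENNReal.ofReal (Real.log (coveringNumber A ε) / Real.log (1 / ε)) with hG
  -- basic tendsto facts
  have h_logt : Tendsto Real.log atTop atTop := Real.tendsto_log_atTop
  have h_inv0 : Tendsto (fun t : ℝ => 1 / t) atTop (𝓝[>] (0:ℝ)) := by
    refine tendsto_nhdsWithin_iff.2 ⟨?_, ?_⟩
    · simpa [one_div] using tendsto_inv_atTop_zero (𝕜 := ℝ)
    · filter_upwards [eventually_gt_atTop (0:ℝ)] with t ht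
      exact Set.mem_Ioi.2 (by positivity)
  have h_invtop : Tendsto (fun ε : ℝ => 1 / ε) (𝓝[>] (0:ℝ)) atTop := by
    simpa [one_div] using tendsto_inv_nhdsGT_zero (𝕜 := ℝ)
  have h_loginv : Tendsto (fun ε : ℝ => Real.log (1 / ε)) (𝓝[>] (0:ℝ)) atTop :=
    h_logt.comp h_invtop
  -- the fundamental eventual upper bound
  have ev_I : ∀ᶠ t in atTop, F t ≤ G (1 / t) + ENNReal.ofReal (2 / Real.log t) := by
    filter_upwards [eventually_ge_atTop (3:ℝ), h_logt.eventually_ge_atTop 1] with t ht3 hlt1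
    have ht0 : (0:ℝ) < t := by linarith
    have hε : (0:ℝ) < 1 / t := by positivity
    have hlt0 : (0:ℝ) < Real.log t := by linarith
    have h1 : Real.log (maxDiv A t).toReal ≤ Real.log (coveringNumber A (1 / t)) + 2 := by
      have h2 := ell_le (A := A) ht0.le hε
      have h3 : 2 * t * (1 / t) = 2 := by field_simp
      rw [h3] at h2; exact h2
    have h2 : Real.log (maxDiv A t).toReal / Real.log t
        ≤ Real.log (coveringNumber A (1 / t)) / Real.log t + 2 / Real.log t := by
      rw [← add_div]
      gcongr
    have hGt : G (1 / t) = ENNReal.ofReal (Real.log (coveringNumber A (1 / t)) / Real.log t) := by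
      rw [hG]; dsimp only; rw [one_div_one_div]
    calc F t ≤ ENNReal.ofReal (Real.log (coveringNumber A (1 / t)) / Real.log t
          + 2 / Real.log t) := ENNReal.ofReal_le_ofReal h2
      _ ≤ ENNReal.ofReal (Real.log (coveringNumber A (1 / t)) / Real.log t)
          + ENNReal.ofReal (2 / Real.log t) := ENNReal.ofReal_add_le
      _ = G (1 / t) + ENNReal.ofReal (2 / Real.log t) := by rw [hGt]
  have h2l : Tendsto (fun t : ℝ => 2 / Real.log t) atTop (𝓝 0) :=
    tendsto_const_nhds.div_atTop h_logt
  -- key 1 : limsup F ≤ limsup G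
  have key1 : limsup F atTop ≤ limsup G (𝓝[>] (0:ℝ)) := by
    by_contra hcon
    push_neg at hcon
    obtain ⟨c, hc1, hc2⟩ := exists_between hcon
    have hev : ∀ᶠ ε in 𝓝[>] (0:ℝ), G ε < c := eventually_lt_of_limsup_lt hc1
    have hevt : ∀ᶠ t in atTop, G (1 / t) < c := h_inv0.eventually hev
    have hce : limsup F atTop ≤ c := by
      refine ENNReal.le_of_forall_pos_le_add fun δ hδ _ => ?_
      have hδ' : (0:ℝ) < δ := hδ
      have hev3 : ∀ᶠ t in atTop, (2:ℝ) / Real.log t ≤ δ :=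
        h2l.eventually (eventually_le_nhds hδ')
      refine limsup_le_of_le (by isBoundedDefault) ?_
      filter_upwards [ev_I, hevt, hev3] with t h1 h2 h3
      calc F t ≤ G (1 / t) + ENNReal.ofReal (2 / Real.log t) := h1
        _ ≤ c + ↑δ := by
            refine add_le_add h2.le ?_
            rw [← ENNReal.ofReal_coe_nnreal]
            exact ENNReal.ofReal_le_ofReal h3
    exact absurd (hc2.trans_le hce) (lt_irrefl c)
  -- key 4 : liminf F ≤ liminf G
  have key4 : liminf F atTop ≤ liminf G (𝓝[>] (0:ℝ)) := by
    by_contra hcon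
    push_neg at hcon
    obtain ⟨c, hc1, hc2⟩ := exists_between hcon
    have hfreq : ∃ᶠ ε in 𝓝[>] (0:ℝ), G ε < c :=
      frequently_lt_of_liminf_lt (by isBoundedDefault) hc1
    have hfreqt : ∃ᶠ t in atTop, G (1 / t) < c := by
      have h1 : ∃ᶠ ε in 𝓝[>] (0:ℝ), G (1 / (1 / ε)) < c := by
        refine hfreq.mono fun ε hε => ?_
        rwa [one_div_one_div]
      have h2 : ∃ᶠ t in Filter.map (fun ε : ℝ => 1 / ε) (𝓝[>] (0:ℝ)), G (1 / t) < c :=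
        frequently_map.2 h1
      exact h2.filter_mono h_invtop
    have hce : liminf F atTop ≤ c := by
      refine ENNReal.le_of_forall_pos_le_add fun δ hδ _ => ?_
      have hδ' : (0:ℝ) < δ := hδ
      have hev3 : ∀ᶠ t in atTop, (2:ℝ) / Real.log t ≤ δ :=
        h2l.eventually (eventually_le_nhds hδ')
      refine liminf_le_of_frequently_le ?_ (by isBoundedDefault)
      refine (hfreqt.and_eventually (ev_I.and hev3)).mono ?_
      rintro t ⟨h2, h1, h3⟩
      calc F t ≤ G (1 / t) + ENNReal.ofReal (2 / Real.log t) := h1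
        _ ≤ c + ↑δ := by
            refine add_le_add h2.le ?_
            rw [← ENNReal.ofReal_coe_nnreal]
            exact ENNReal.ofReal_le_ofReal h3
    exact absurd (hc2.trans_le hce) (lt_irrefl c)
  -- key 2 : limsup G ≤ limsup F
  have key2 : limsup G (𝓝[>] (0:ℝ)) ≤ limsup F atTop := by
    by_contra hcon
    push_neg at hcon
    obtain ⟨b, hb1, hb2⟩ := exists_between hcon
    have hbne : b ≠ ⊤ := (hb2.trans_le le_top).ne
    set b' : ℝ := b.toReal with hb'
    have hb'0 : 0 ≤ b' := ENNReal.toReal_nonneg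
    have hfreq : ∃ᶠ ε in 𝓝[>] (0:ℝ), b < G ε :=
      frequently_lt_of_lt_limsup (by isBoundedDefault) hb2
    have hbmax : ∀ η : ℝ, 0 < η → ENNReal.ofReal (b' - η) ≤ limsup F atTop := by
      intro η hη
      set T : ℝ → ℝ := fun ε => 1 / ε * (Real.log (1 / ε)) ^ 2 with hT
      have hTtop : Tendsto T (𝓝[>] (0:ℝ)) atTop := by
        refine tendsto_atTop_mono' _ ?_ h_invtop
        filter_upwards [h_loginv.eventually_ge_atTop 1, self_mem_nhdsWithin] with ε h1 h2
        have hε0 : (0:ℝ) < ε := h2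
        have h1e : (0:ℝ) < 1 / ε := by positivity
        have hL2 : (1:ℝ) ≤ Real.log (1 / ε) ^ 2 := by nlinarith
        rw [hT]; dsimp only
        calc 1 / ε = 1 / ε * 1 := (mul_one _).symm
          _ ≤ 1 / ε * Real.log (1 / ε) ^ 2 := mul_le_mul_of_nonneg_left hL2 h1e.le
      have hev_poly : ∀ᶠ ε in 𝓝[>] (0:ℝ), Real.log 2 ≤
          η * Real.log (1 / ε) - 2 * b' * Real.log (Real.log (1 / ε)) :=
        ((tendsto_linear_sub_log η (2 * b') hη).comp h_loginv).eventually_ge_atTop _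
      have hfr2 : ∃ᶠ ε in 𝓝[>] (0:ℝ), ENNReal.ofReal (b' - η) ≤ F (T ε) := by
        refine ((hfreq.and_eventually (hev_poly.and
          (h_loginv.eventually_ge_atTop (max 1 b')))).and_eventually
          self_mem_nhdsWithin).mono ?_
        rintro ε ⟨⟨hGb, hpoly, hli⟩, hε0'⟩
        have hε0 : (0:ℝ) < ε := hε0'
        set L : ℝ := Real.log (1 / ε) with hLdef
        have hL1 : 1 ≤ L := le_trans (le_max_left _ _) hli
        have hLb : b' ≤ L := le_trans (le_max_right _ _) hli
        have hL0 : (0:ℝ) < L := by linarith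
        have h1e : (0:ℝ) < 1 / ε := by positivity
        have hg : b' * L ≤ Real.log (coveringNumber A ε) := by
          have hx := (ENNReal.lt_ofReal_iff_toReal_lt hbne).1 hGb
          rw [← hLdef] at hx
          have := (lt_div_iff₀ hL0).1 hx
          linarith
        have hTpos : (0:ℝ) < T ε := by
          have hL2 : (0:ℝ) < L ^ 2 := by nlinarith
          rw [hT]; dsimp only; rw [← hLdef]
          exact mul_pos h1e hL2
        have hlogT : Real.log (T ε) = L + 2 * Real.log L := by
          rw [hT]; dsimp only
          rw [Real.log_mul (by positivity) (by positivity), Real.log_pow, ← hLdef]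
          push_cast; ring
        have hlogL0 : 0 ≤ Real.log L := Real.log_nonneg hL1
        have hlogT0 : (0:ℝ) < Real.log (T ε) := by rw [hlogT]; linarith
        have hA3 := le_ell (A := A) (t := T ε) (ε := ε / 2) hTpos.le (by linarith)
        have h2e : 2 * (ε / 2) = ε := by ring
        have hTe : 2 * T ε * (ε / 2) = L ^ 2 := by
          rw [hT]; dsimp only; rw [← hLdef]; field_simp
        rw [h2e, hTe] at hA3
        have hmin : b' * L - Real.log 2 ≤ Real.log (maxDiv A (T ε)).toReal := by
          refine le_trans ?_ hA3
          have h1 : b' * L ≤ L ^ 2 := by nlinarith [mul_le_mul_of_nonneg_right hLb hL0.le]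
          have h2 := le_min hg h1
          linarith
        have hfinal : b' - η ≤ Real.log (maxDiv A (T ε)).toReal / Real.log (T ε) := by
          rw [le_div_iff₀ hlogT0]
          refine le_trans ?_ hmin
          rw [hlogT]
          linarith [hpoly, mul_nonneg hη.le hlogL0]
        exact ENNReal.ofReal_le_ofReal hfinal
      have hfr3 : ∃ᶠ t in atTop, ENNReal.ofReal (b' - η) ≤ F t :=
        ((frequently_map (m := T) (f := 𝓝[>] (0:ℝ))
          (P := fun t => ENNReal.ofReal (b' - η) ≤ F t)).2 hfr2).filter_mono hTtop
      exact le_limsup_of_frequently_le hfr3 (by isBoundedDefault)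
    have hble : b ≤ limsup F atTop := by
      refine ENNReal.le_of_forall_pos_le_add fun δ hδ _ => ?_
      have h1 := hbmax δ hδ
      calc b = ENNReal.ofReal b' := (ENNReal.ofReal_toReal hbne).symm
        _ = ENNReal.ofReal ((b' - δ) + δ) := by ring_nf
        _ ≤ ENNReal.ofReal (b' - δ) + ENNReal.ofReal δ := ENNReal.ofReal_add_le
        _ ≤ limsup F atTop + ↑δ := add_le_add h1 (by rw [ENNReal.ofReal_coe_nnreal])
    exact absurd (hb1.trans_le hble) (lt_irrefl _)
  -- key 3 : liminf G ≤ liminf F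
  have key3 : liminf G (𝓝[>] (0:ℝ)) ≤ liminf F atTop := by
    by_contra hcon
    push_neg at hcon
    obtain ⟨b, hb1, hb2⟩ := exists_between hcon
    have hbne : b ≠ ⊤ := (hb2.trans_le le_top).ne
    set b' : ℝ := b.toReal with hb'
    have hb'0 : 0 ≤ b' := ENNReal.toReal_nonneg
    have hev : ∀ᶠ ε in 𝓝[>] (0:ℝ), b < G ε := eventually_lt_of_lt_liminf hb2
    set E : ℝ → ℝ := fun t => 2 * (Real.log t) ^ 2 / t with hE
    have hE0 : Tendsto E atTop (𝓝[>] (0:ℝ)) := by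
      refine tendsto_nhdsWithin_iff.2 ⟨?_, ?_⟩
      · have h0 := Real.tendsto_pow_log_div_mul_add_atTop 1 0 2 one_ne_zero
        have h1 := h0.const_mul (2:ℝ)
        simp only [mul_zero, one_mul, add_zero] at h1 ⊢
        refine h1.congr fun t => ?_
        rw [hE]; ring
      · filter_upwards [eventually_ge_atTop (3:ℝ), h_logt.eventually_ge_atTop 1] with t h3 hl
        have ht0 : (0:ℝ) < t := by linarith
        rw [hE]
        exact Set.mem_Ioi.2 (by positivity)
    have hbmin : ∀ η : ℝ, 0 < η → ENNReal.ofReal (b' - η) ≤ liminf F atTop := by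
      intro η hη
      have hev_poly : ∀ᶠ t in atTop, Real.log 2 + b' * Real.log 2 ≤
          η * Real.log t - 2 * b' * Real.log (Real.log t) :=
        ((tendsto_linear_sub_log η (2 * b') hη).comp h_logt).eventually_ge_atTop _
      have hevF : ∀ᶠ t in atTop, ENNReal.ofReal (b' - η) ≤ F t := by
        filter_upwards [hE0.eventually hev, hev_poly, eventually_ge_atTop (3:ℝ),
          h_logt.eventually_ge_atTop (max 1 b'),
          ((tendsto_linear_sub_log 1 2 one_pos).comp h_logt).eventually_ge_atTop
            (Real.log 2 + 1)] with t hGb hpoly ht3 hlt hpos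
        have ht0 : (0:ℝ) < t := by linarith
        have hl1 : (1:ℝ) ≤ Real.log t := le_trans (le_max_left _ _) hlt
        have hlb : b' ≤ Real.log t := le_trans (le_max_right _ _) hlt
        have hlt0 : (0:ℝ) < Real.log t := by linarith
        have hloglog0 : 0 ≤ Real.log (Real.log t) := Real.log_nonneg hl1
        have hEpos : (0:ℝ) < E t := by rw [hE]; dsimp only; positivity
        have hlogE : Real.log (E t) = Real.log 2 + 2 * Real.log (Real.log t) - Real.log t := by
          rw [hE]; dsimp only
          rw [div_eq_mul_inv, Real.log_mul (by positivity) (by positivity),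
            Real.log_mul (by norm_num) (by positivity), Real.log_pow, Real.log_inv]
          push_cast; ring
        have hLi : Real.log (1 / E t)
            = Real.log t - Real.log 2 - 2 * Real.log (Real.log t) := by
          rw [one_div, Real.log_inv, hlogE]; ring
        set Li : ℝ := Real.log (1 / E t) with hLidef
        have hLi1 : 1 ≤ Li := by
          have := hpos
          simp only [Function.comp_apply] at this
          rw [hLi]; linarith
        have hLile : Li ≤ Real.log t := by
          rw [hLi]
          have hlog2 : (0:ℝ) ≤ Real.log 2 := Real.log_nonneg (by norm_num)
          linarith
        have hLi0 : (0:ℝ) < Li := by linarith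
        have hg : b' * Li ≤ Real.log (coveringNumber A (E t)) := by
          simp only [hG] at hGb
          have hx := (ENNReal.lt_ofReal_iff_toReal_lt hbne).1 hGb
          rw [← hLidef] at hx
          have := (lt_div_iff₀ hLi0).1 hx
          linarith
        have hA3 := le_ell (A := A) (t := t) (ε := (Real.log t) ^ 2 / t) ht0.le (by positivity)
        have h2e : 2 * ((Real.log t) ^ 2 / t) = E t := by rw [hE]; ring
        have hTe : 2 * t * ((Real.log t) ^ 2 / t) = 2 * (Real.log t) ^ 2 := by
          field_simp
        rw [h2e, hTe] at hA3
        have hmin : b' * Li - Real.log 2 ≤ Real.log (maxDiv A t).toReal := by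
          refine le_trans ?_ hA3
          have h1 : b' * Li ≤ 2 * (Real.log t) ^ 2 := by
            nlinarith [mul_le_mul hlb hLile hLi0.le (by linarith : (0:ℝ) ≤ Real.log t)]
          have h2 := le_min hg h1
          linarith
        have hfinal : b' - η ≤ Real.log (maxDiv A t).toReal / Real.log t := by
          rw [le_div_iff₀ hlt0]
          refine le_trans ?_ hmin
          rw [hLi]
          linarith [hpoly]
        simp only [hF]
        exact ENNReal.ofReal_le_ofReal hfinal
      exact le_liminf_of_le (by isBoundedDefault) hevF
    have hble : b ≤ liminf F atTop := by
      refine ENNReal.le_of_forall_pos_le_add fun δ hδ _ => ?_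
      have h1 := hbmin δ hδ
      calc b = ENNReal.ofReal b' := (ENNReal.ofReal_toReal hbne).symm
        _ = ENNReal.ofReal ((b' - δ) + δ) := by ring_nf
        _ ≤ ENNReal.ofReal (b' - δ) + ENNReal.ofReal δ := ENNReal.ofReal_add_le
        _ ≤ liminf F atTop + ↑δ := add_le_add h1 (by rw [ENNReal.ofReal_coe_nnreal])
    exact absurd (hb1.trans_le hble) (lt_irrefl _)
  exact ⟨le_antisymm key1 key2, le_antisymm key4 key3⟩



end Aux

/-- For a nonempty compact metric space `A`,
`limsup_{t→∞} log|tA|₊/log t` is the upper Minkowski dimension of `A` and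
`liminf_{t→∞} log|tA|₊/log t` is the lower Minkowski dimension of `A`. -/
theorem stmt12 (A : Type*) [MetricSpace A] [MeasurableSpace A] [BorelSpace A]
    [CompactSpace A] [Nonempty A] :
    limsup (fun t : ℝ =>
        ENNReal.ofReal (Real.log (maxDiv A t).toReal / Real.log t)) atTop
      = upperMinkowski A ∧
    liminf (fun t : ℝ =>
        ENNReal.ofReal (Real.log (maxDiv A t).toReal / Real.log t)) atTop
      = lowerMinkowski A := by
  exact maxDiv_limsup_liminf (A := A)
end
end

section
/- Let (A,d) be a nonempty compact metric space, and let ε > 0 and t > 0. Then |tA|_+ ≤ e^{tε} · N(A, ε/2). -/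
open MeasureTheory Filter
open scoped ENNReal Topology

noncomputable section

/-- For a nonempty compact metric space `A` and `ε, t > 0`,
`|tA|₊ ≤ e^{tε}·N(A,ε/2)`. -/
theorem stmt13 (A : Type*) [MetricSpace A] [MeasurableSpace A] [BorelSpace A]
    [CompactSpace A] [Nonempty A] (ε t : ℝ) (hε : 0 < ε) (ht : 0 < t) :
    maxDiv A t ≤ ENNReal.ofReal (Real.exp (t * ε) * coveringNumber A (ε / 2)) := by
  classical
  have hε2 : (0:ℝ) < ε / 2 := by linarith
  -- the covering number is attained
  obtain ⟨s, hcard, hcov⟩ : ∃ s : Finset A, s.card = coveringNumber A (ε / 2) ∧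
      ∀ a : A, ∃ c ∈ s, dist a c ≤ ε / 2 := by
    have hne : Set.Nonempty
        {m : ℕ | ∃ s : Finset A, s.card = m ∧ ∀ a : A, ∃ c ∈ s, dist a c ≤ ε / 2} := by
      obtain ⟨T, hTfin, hTcov⟩ :=
        (Metric.totallyBounded_iff.mp (isCompact_univ : IsCompact (Set.univ : Set A)).totallyBounded) (ε / 2) hε2
      refine ⟨hTfin.toFinset.card, hTfin.toFinset, rfl, fun a => ?_⟩
      have := hTcov (Set.mem_univ a)
      simp only [Set.mem_iUnion] at this
      obtain ⟨y, hy, hay⟩ := this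
      exact ⟨y, hTfin.mem_toFinset.mpr hy, (Metric.mem_ball.mp hay).le⟩
    obtain ⟨s, h1, h2⟩ := Nat.sInf_mem hne
    exact ⟨s, h1, h2⟩
  set n : ℕ := s.card with hn
  have hnpos : 0 < n := by
    obtain ⟨a⟩ := ‹Nonempty A›
    obtain ⟨c, hc, -⟩ := hcov a
    exact Finset.card_pos.mpr ⟨c, hc⟩
  -- an enumeration of the covering balls
  let e := s.equivFin
  let x : Fin n → A := fun i => (e.symm i : A)
  let B : ℕ → Set A := fun k => if h : k < n then Metric.closedBall (x ⟨k, h⟩) (ε / 2) else ∅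
  have hBm : ∀ k, MeasurableSet (B k) := by
    intro k
    by_cases h : k < n
    · simp only [B, dif_pos h]
      exact Metric.isClosed_closedBall.measurableSet
    · simp only [B, dif_neg h]
      exact MeasurableSet.empty
  have hBcov : ∀ a : A, ∃ k, a ∈ B k := by
    intro a
    obtain ⟨c, hc, hd⟩ := hcov a
    refine ⟨(e ⟨c, hc⟩).1, ?_⟩
    have h1 : (e ⟨c, hc⟩).1 < n := (e ⟨c, hc⟩).2
    have h2 : x ⟨(e ⟨c, hc⟩).1, h1⟩ = c := by
      show (e.symm ⟨(e ⟨c, hc⟩).1, h1⟩ : A) = c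
      have : (⟨(e ⟨c, hc⟩).1, h1⟩ : Fin n) = e ⟨c, hc⟩ := rfl
      rw [this, Equiv.symm_apply_apply]
    simp only [B, dif_pos h1, h2]
    exact Metric.mem_closedBall.mpr hd
  have hBdiam : ∀ k, ∀ a ∈ B k, ∀ b ∈ B k, dist a b ≤ ε := by
    intro k a ha b hb
    by_cases h : k < n
    · simp only [B, dif_pos h, Metric.mem_closedBall] at ha hb
      calc dist a b ≤ dist a (x ⟨k, h⟩) + dist (x ⟨k, h⟩) b := dist_triangle _ _ _
        _ ≤ ε / 2 + ε / 2 := by rw [dist_comm (x ⟨k, h⟩) b]; exact add_le_add ha hb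
        _ = ε := by ring
    · simp only [B, dif_neg h] at ha
      exact absurd ha (Set.notMem_empty a)
  have hBempty : ∀ k, n ≤ k → B k = ∅ := fun k hk => dif_neg (not_lt.mpr hk)
  -- disjointify
  set D : ℕ → Set A := disjointed B with hD
  have hDm : ∀ k, MeasurableSet (D k) := MeasurableSet.disjointed hBm
  have hDdisj : Pairwise (Function.onFun Disjoint D) := disjoint_disjointed B
  have hDsub : ∀ k, D k ⊆ B k := disjointed_subset B
  have hDunion : ⋃ k, D k = Set.univ := by
    rw [hD, iUnion_disjointed]
    exact Set.iUnion_eq_univ_iff.mpr hBcov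
  have hDdiam : ∀ k, ∀ a ∈ D k, ∀ b ∈ D k, dist a b ≤ ε :=
    fun k a ha b hb => hBdiam k a (hDsub k ha) b (hDsub k hb)
  -- main estimate for each probability measure
  refine iSup_le fun μ => ?_
  set m : Measure A := (μ : Measure A) with hm
  set f : A → A → ℝ≥0∞ := fun a b => ENNReal.ofReal (Real.exp (-t * dist a b)) with hf
  set I : ℝ≥0∞ := ∫⁻ a, ∫⁻ b, f a b ∂m ∂m with hI
  have hDzero : ∀ k, n ≤ k → m (D k) = 0 := by
    intro k hk
    have : D k ⊆ (∅ : Set A) := by rw [← hBempty k hk]; exact hDsub k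
    exact measure_mono_null this (measure_empty)
  -- lower bound for the double integral on each piece
  have hkey : ∀ k, ENNReal.ofReal (Real.exp (-(t * ε))) * (m (D k)) ^ 2 ≤
      ∫⁻ a in D k, ∫⁻ b, f a b ∂m ∂m := by
    intro k
    have h1 : ∀ a ∈ D k, ENNReal.ofReal (Real.exp (-(t * ε))) * m (D k) ≤ ∫⁻ b, f a b ∂m := by
      intro a ha
      calc ENNReal.ofReal (Real.exp (-(t * ε))) * m (D k)
          = ∫⁻ _ in D k, ENNReal.ofReal (Real.exp (-(t * ε))) ∂m := (setLIntegral_const _ _).symm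
        _ ≤ ∫⁻ b in D k, f a b ∂m := by
            refine setLIntegral_mono' (hDm k) fun b hb => ?_
            refine ENNReal.ofReal_le_ofReal (Real.exp_le_exp.mpr ?_)
            have := hDdiam k a ha b hb
            nlinarith
        _ ≤ ∫⁻ b, f a b ∂m := setLIntegral_le_lintegral _ _
    calc ENNReal.ofReal (Real.exp (-(t * ε))) * (m (D k)) ^ 2
        = (ENNReal.ofReal (Real.exp (-(t * ε))) * m (D k)) * m (D k) := by ring
      _ = ∫⁻ _ in D k, ENNReal.ofReal (Real.exp (-(t * ε))) * m (D k) ∂m :=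
          (setLIntegral_const _ _).symm
      _ ≤ ∫⁻ a in D k, ∫⁻ b, f a b ∂m ∂m := setLIntegral_mono' (hDm k) h1
  -- split the double integral over the partition
  have hIsplit : I = ∑' k, ∫⁻ a in D k, ∫⁻ b, f a b ∂m ∂m := by
    rw [hI]
    conv_lhs => rw [← setLIntegral_univ (μ := m) fun a => ∫⁻ b, f a b ∂m, ← hDunion]
    exact lintegral_iUnion hDm hDdisj _
  have hIlow : ENNReal.ofReal (Real.exp (-(t * ε))) * ∑ k ∈ Finset.range n, (m (D k)) ^ 2 ≤ I := by
    rw [hIsplit, Finset.mul_sum]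
    calc ∑ k ∈ Finset.range n, ENNReal.ofReal (Real.exp (-(t * ε))) * (m (D k)) ^ 2
        ≤ ∑ k ∈ Finset.range n, ∫⁻ a in D k, ∫⁻ b, f a b ∂m ∂m :=
          Finset.sum_le_sum fun k _ => hkey k
      _ ≤ ∑' k, ∫⁻ a in D k, ∫⁻ b, f a b ∂m ∂m := ENNReal.sum_le_tsum _
  -- total mass bound
  have hmass : (1 : ℝ≥0∞) ≤ ∑ k ∈ Finset.range n, m (D k) := by
    have h1 : (1 : ℝ≥0∞) = m Set.univ := (measure_univ (μ := m)).symm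
    have h2 : m Set.univ ≤ ∑' k, m (D k) := by
      rw [← hDunion]; exact measure_iUnion_le D
    have h3 : ∑' k, m (D k) = ∑ k ∈ Finset.range n, m (D k) :=
      tsum_eq_sum fun k hk => hDzero k (by simpa using hk)
    rw [h1, ← h3]; exact h2
  -- Cauchy–Schwarz
  have hfin : ∀ k, m (D k) ≠ ∞ := fun k => measure_ne_top m (D k)
  have hCS : (∑ k ∈ Finset.range n, m (D k)) ^ 2 ≤
      (n : ℝ≥0∞) * ∑ k ∈ Finset.range n, (m (D k)) ^ 2 := by
    set r : ℕ → ℝ := fun k => (m (D k)).toReal with hr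
    have hr0 : ∀ k ∈ Finset.range n, 0 ≤ r k := fun k _ => ENNReal.toReal_nonneg
    have hsum : ∑ k ∈ Finset.range n, m (D k) = ENNReal.ofReal (∑ k ∈ Finset.range n, r k) := by
      rw [ENNReal.ofReal_sum_of_nonneg hr0]
      exact Finset.sum_congr rfl fun k _ => (ENNReal.ofReal_toReal (hfin k)).symm
    have hsq : ∀ k, (m (D k)) ^ 2 = ENNReal.ofReal (r k ^ 2) := by
      intro k
      rw [sq, sq, ENNReal.ofReal_mul ENNReal.toReal_nonneg, ENNReal.ofReal_toReal (hfin k)]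
    calc (∑ k ∈ Finset.range n, m (D k)) ^ 2
        = ENNReal.ofReal ((∑ k ∈ Finset.range n, r k) ^ 2) := by
          rw [hsum, ← ENNReal.ofReal_pow (Finset.sum_nonneg hr0)]
      _ ≤ ENNReal.ofReal ((n : ℝ) * ∑ k ∈ Finset.range n, r k ^ 2) := by
          refine ENNReal.ofReal_le_ofReal ?_
          have := sq_sum_le_card_mul_sum_sq (s := Finset.range n) (f := r)
          simpa using this
      _ = (n : ℝ≥0∞) * ∑ k ∈ Finset.range n, (m (D k)) ^ 2 := by
          rw [ENNReal.ofReal_mul (by positivity), ENNReal.ofReal_natCast,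
            ENNReal.ofReal_sum_of_nonneg (fun k _ => by positivity)]
          congr 1
          exact Finset.sum_congr rfl fun k _ => (hsq k).symm
  -- combine
  set c : ℝ≥0∞ := (n : ℝ≥0∞) * ENNReal.ofReal (Real.exp (t * ε)) with hc
  have hexp : ENNReal.ofReal (Real.exp (t * ε)) * ENNReal.ofReal (Real.exp (-(t * ε))) = 1 := by
    rw [← ENNReal.ofReal_mul (Real.exp_nonneg _), ← Real.exp_add]
    simp
  have hone : (1 : ℝ≥0∞) ≤ c * I := by
    calc (1 : ℝ≥0∞) ≤ (∑ k ∈ Finset.range n, m (D k)) ^ 2 := by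
          calc (1 : ℝ≥0∞) = 1 ^ 2 := (one_pow 2).symm
            _ ≤ _ := pow_le_pow_left' hmass 2
      _ ≤ (n : ℝ≥0∞) * ∑ k ∈ Finset.range n, (m (D k)) ^ 2 := hCS
      _ = (n : ℝ≥0∞) * (ENNReal.ofReal (Real.exp (t * ε)) *
            (ENNReal.ofReal (Real.exp (-(t * ε))) * ∑ k ∈ Finset.range n, (m (D k)) ^ 2)) := by
          rw [← mul_assoc (ENNReal.ofReal _), hexp, one_mul]
      _ ≤ (n : ℝ≥0∞) * (ENNReal.ofReal (Real.exp (t * ε)) * I) := by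
          exact mul_le_mul_right (mul_le_mul_right hIlow _) _
      _ = c * I := by rw [hc, mul_assoc]
  have hc0 : c ≠ 0 := by
    rw [hc]
    exact mul_ne_zero (Nat.cast_ne_zero.mpr hnpos.ne')
      (ne_of_gt (ENNReal.ofReal_pos.mpr (Real.exp_pos _)))
  have hctop : c ≠ ∞ := by
    rw [hc]
    exact ENNReal.mul_ne_top (ENNReal.natCast_ne_top n) ENNReal.ofReal_ne_top
  have hinv : c⁻¹ ≤ I := by
    calc c⁻¹ = c⁻¹ * 1 := (mul_one _).symm
      _ ≤ c⁻¹ * (c * I) := mul_le_mul_right hone _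
      _ = I := by rw [← mul_assoc, ENNReal.inv_mul_cancel hc0 hctop, one_mul]
  have hfinal : I⁻¹ ≤ c := by
    calc I⁻¹ ≤ (c⁻¹)⁻¹ := ENNReal.inv_le_inv.mpr hinv
      _ = c := inv_inv _
  have hceq : ENNReal.ofReal (Real.exp (t * ε) * (coveringNumber A (ε / 2) : ℝ)) = c := by
    rw [hc, ← hcard, ENNReal.ofReal_mul (Real.exp_nonneg _), ENNReal.ofReal_natCast, mul_comm]
  rw [hceq]
  exact hfinal
end
end

section
/- Let (A,d) be a nonempty compact metric space, and let ε > 0 and t > 0. Then 1/|tA|_+ ≤ 1/M(A,ε) + e^{-tε}, i.e. |tA|_+ ≥ (1/M(A,ε) + e^{-tε})^{-1}. -/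
open MeasureTheory Filter
open scoped ENNReal Topology

noncomputable section

lemma sep_of_disjoint {A : Type*} [MetricSpace A] {ε : ℝ} (hε : 0 < ε) {x y : A}
    (h : Disjoint (Metric.closedBall x ε) (Metric.closedBall y ε)) :
    ε < dist x y := by
  by_contra hle
  push_neg at hle
  have hy1 : y ∈ Metric.closedBall x ε := Metric.mem_closedBall.2 (by rwa [dist_comm])
  have hy2 : y ∈ Metric.closedBall y ε := Metric.mem_closedBall_self hε.le
  exact (h.ne_of_mem hy1 hy2) rfl

lemma key_bound (A : Type*) [MetricSpace A] [MeasurableSpace A] [BorelSpace A]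
    (ε t : ℝ) (hε : 0 < ε) (ht : 0 < t) (m : ℕ) (hm : 0 < m) (x : Fin m → A)
    (hx : Pairwise fun j k => Disjoint (Metric.closedBall (x j) ε) (Metric.closedBall (x k) ε)) :
    (maxDiv A t)⁻¹ ≤ ENNReal.ofReal ((m : ℝ)⁻¹ + Real.exp (-t * ε)) := by
  have hm0 : (m : ℝ≥0∞) ≠ 0 := by exact_mod_cast hm.ne'
  have hmtop : (m : ℝ≥0∞) ≠ ⊤ := ENNReal.natCast_ne_top m
  set μ₀ : Measure A := (m : ℝ≥0∞)⁻¹ • ∑ j : Fin m, Measure.dirac (x j) with hμ₀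
  have hprob : IsProbabilityMeasure μ₀ := by
    constructor
    simp only [hμ₀, Measure.smul_apply, Measure.coe_finset_sum, Finset.sum_apply,
      smul_eq_mul, measure_univ, Finset.sum_const, Finset.card_univ, Fintype.card_fin,
      nsmul_eq_mul, mul_one]
    exact ENNReal.inv_mul_cancel hm0 hmtop
  have hlint : ∀ f : A → ℝ≥0∞,
      ∫⁻ a, f a ∂μ₀ = (m : ℝ≥0∞)⁻¹ * ∑ j : Fin m, f (x j) := by
    intro f
    rw [hμ₀, lintegral_smul_measure, lintegral_finset_sum_measure]
    simp [lintegral_dirac]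
  set I : ℝ≥0∞ := ∫⁻ a, ∫⁻ b, ENNReal.ofReal (Real.exp (-t * dist a b)) ∂μ₀ ∂μ₀ with hI
  have hIeq : I = (m : ℝ≥0∞)⁻¹ * ∑ j : Fin m, ((m : ℝ≥0∞)⁻¹ *
      ∑ k : Fin m, ENNReal.ofReal (Real.exp (-t * dist (x j) (x k)))) := by
    rw [hI, hlint]
    congr 1
    exact Finset.sum_congr rfl fun j _ => hlint _
  have hterm : ∀ j k : Fin m, ENNReal.ofReal (Real.exp (-t * dist (x j) (x k)))
      ≤ (if j = k then 1 else 0) + ENNReal.ofReal (Real.exp (-t * ε)) := by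
    intro j k
    by_cases hjk : j = k
    · have h1 : ENNReal.ofReal (Real.exp (-t * dist (x j) (x k))) ≤ 1 := by
        simp [hjk, ENNReal.ofReal_le_one, Real.exp_le_one_iff,
          mul_nonneg ht.le dist_nonneg]
      rw [if_pos hjk]
      exact h1.trans le_self_add
    · have hd : ε < dist (x j) (x k) := sep_of_disjoint hε (hx hjk)
      have : Real.exp (-t * dist (x j) (x k)) ≤ Real.exp (-t * ε) :=
        Real.exp_le_exp.2 (by nlinarith)
      simp only [hjk, if_false, zero_add]
      exact ENNReal.ofReal_le_ofReal this
  have hinner : ∀ j : Fin m, ∑ k : Fin m, ENNReal.ofReal (Real.exp (-t * dist (x j) (x k)))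
      ≤ 1 + (m : ℝ≥0∞) * ENNReal.ofReal (Real.exp (-t * ε)) := by
    intro j
    calc ∑ k : Fin m, ENNReal.ofReal (Real.exp (-t * dist (x j) (x k)))
        ≤ ∑ k : Fin m, ((if j = k then 1 else 0) + ENNReal.ofReal (Real.exp (-t * ε))) :=
          Finset.sum_le_sum fun k _ => hterm j k
      _ = 1 + (m : ℝ≥0∞) * ENNReal.ofReal (Real.exp (-t * ε)) := by
          rw [Finset.sum_add_distrib, Finset.sum_ite_eq Finset.univ j (fun _ => (1 : ℝ≥0∞))]
          simp [mul_comm]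
  have hIle : I ≤ (m : ℝ≥0∞)⁻¹ + ENNReal.ofReal (Real.exp (-t * ε)) := by
    rw [hIeq]
    calc (m : ℝ≥0∞)⁻¹ * ∑ j : Fin m, ((m : ℝ≥0∞)⁻¹ *
          ∑ k : Fin m, ENNReal.ofReal (Real.exp (-t * dist (x j) (x k))))
        ≤ (m : ℝ≥0∞)⁻¹ * ∑ j : Fin m, ((m : ℝ≥0∞)⁻¹ *
            (1 + (m : ℝ≥0∞) * ENNReal.ofReal (Real.exp (-t * ε)))) := by
          gcongr with j
          exact hinner j
      _ = (m : ℝ≥0∞)⁻¹ + ENNReal.ofReal (Real.exp (-t * ε)) := by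
          rw [Finset.sum_const, Finset.card_univ, Fintype.card_fin, nsmul_eq_mul,
            ← mul_assoc, ENNReal.inv_mul_cancel hm0 hmtop, one_mul, mul_add, mul_one,
            ← mul_assoc, ENNReal.inv_mul_cancel hm0 hmtop, one_mul]
  have hmax : I⁻¹ ≤ maxDiv A t := le_iSup (fun μ : ProbabilityMeasure A =>
    (∫⁻ a, ∫⁻ b, ENNReal.ofReal (Real.exp (-t * dist a b))
      ∂(μ : Measure A) ∂(μ : Measure A))⁻¹) (⟨μ₀, hprob⟩ : ProbabilityMeasure A)
  calc (maxDiv A t)⁻¹ ≤ (I⁻¹)⁻¹ := ENNReal.inv_le_inv.2 hmax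
    _ = I := inv_inv I
    _ ≤ (m : ℝ≥0∞)⁻¹ + ENNReal.ofReal (Real.exp (-t * ε)) := hIle
    _ = ENNReal.ofReal ((m : ℝ)⁻¹ + Real.exp (-t * ε)) := by
        rw [ENNReal.ofReal_add (by positivity) (Real.exp_pos _).le,
          ← ENNReal.ofReal_natCast m, ← ENNReal.ofReal_inv_of_pos (by exact_mod_cast hm)]

/-- For a nonempty compact metric space `A` and `ε, t > 0`,
`1/|tA|₊ ≤ 1/M(A,ε) + e^{-tε}`. -/
theorem stmt14 (A : Type*) [MetricSpace A] [MeasurableSpace A] [BorelSpace A]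
    [CompactSpace A] [Nonempty A] (ε t : ℝ) (hε : 0 < ε) (ht : 0 < t) :
    (maxDiv A t)⁻¹
      ≤ ENNReal.ofReal ((packingNumber A ε : ℝ)⁻¹ + Real.exp (-t * ε)) := by
  unfold packingNumber
  set S := {m : ℕ | ∃ x : Fin m → A, Pairwise fun j k =>
    Disjoint (Metric.closedBall (x j) ε) (Metric.closedBall (x k) ε)} with hS
  have h1 : 1 ∈ S := ⟨fun _ => Classical.arbitrary A, Subsingleton.pairwise⟩
  obtain ⟨c, -, hcfin, hccov⟩ := finite_cover_balls_of_compact (isCompact_univ (X := A))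
    (half_pos hε)
  have := hcfin.fintype
  have hbdd : BddAbove S := by
    refine ⟨Fintype.card c, fun m hm => ?_⟩
    obtain ⟨x, hx⟩ := hm
    have hf : ∀ j : Fin m, ∃ y : c, dist (x j) (y : A) < ε / 2 := by
      intro j
      obtain ⟨y, hy⟩ := Set.mem_iUnion₂.1 (hccov (Set.mem_univ (x j)))
      exact ⟨⟨y, hy.1⟩, Metric.mem_ball.1 hy.2⟩
    choose f hf using hf
    have hinj : Function.Injective f := by
      intro j k hjk
      by_contra hne
      have hd : ε < dist (x j) (x k) := sep_of_disjoint hε (hx hne)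
      have : dist (x j) (x k) ≤ dist (x j) (f j : A) + dist (f k : A) (x k) := by
        rw [hjk]; exact dist_triangle _ _ _
      have h2 := hf j
      have h3 := hf k
      rw [dist_comm] at h3
      linarith
    simpa using Fintype.card_le_of_injective f hinj
  have hmem : sSup S ∈ S := Nat.sSup_mem ⟨1, h1⟩ hbdd
  have hpos : 0 < sSup S := le_csSup hbdd h1
  obtain ⟨x, hx⟩ := hmem
  exact key_bound A ε t hε ht (sSup S) hpos x hx
end
end

section
/- Let (A,d) be a finite nonempty metric space satisfying the ultrametric inequality d(a,c) ≤ max(d(a,b), d(b,c)) for all a, b, c ∈ A. For a ∈ A let B(a) := { b ∈ A : d(a,b) ≤ 1 } and w(a) := 1/card(B(a)). Then: (i) for every a ∈ A, Σ_{b ∈ B(a)} w(b) = 1 (so w is an ultraweighting for A); and (ii) Σ_{a ∈ A} w(a) = N(A,1) = M(A,1). -/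
open Finset

noncomputable section

/-- The covering number `N(A,1)`: the smallest `m` such that `A` is the union of `m`
closed balls of radius `1` centered at points of `A`. -/
def coveringNumberOne (A : Type*) [MetricSpace A] : ℕ :=
  sInf {m : ℕ | ∃ s : Finset A, s.card = m ∧ ∀ a : A, ∃ c ∈ s, dist a c ≤ 1}

/-- The packing number `M(A,1)`: the largest `m` such that there are `m` points of `A`
whose closed balls of radius `1` are pairwise disjoint. -/
def packingNumberOne (A : Type*) [MetricSpace A] : ℕ :=
  sSup {m : ℕ | ∃ x : Fin m → A, Pairwise fun j k =>
    Disjoint (Metric.closedBall (x j) 1) (Metric.closedBall (x k) 1)}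

/-- Let `A` be a finite nonempty ultrametric space.  With
`B(a) = {b : d(a,b) ≤ 1}` and `w(a) = 1/#B(a)`, the function `w` is an ultraweighting for
`A` (i.e. `∑_{b ∈ B(a)} w(b) = 1` for all `a`), and the ultramagnitude
`∑_a w(a)` equals `N(A,1) = M(A,1)`. -/
theorem stmt19 (A : Type*) [MetricSpace A] [Fintype A] [Nonempty A]
    (hultra : ∀ a b c : A, dist a c ≤ max (dist a b) (dist b c)) :
    (∀ a : A, ∑ b ∈ Finset.univ.filter (fun b => dist a b ≤ 1),
        (1 : ℝ) / (Finset.univ.filter (fun c => dist b c ≤ 1)).card = 1) ∧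
    (∑ a : A, (1 : ℝ) / (Finset.univ.filter (fun c => dist a c ≤ 1)).card
        = coveringNumberOne A) ∧
    coveringNumberOne A = packingNumberOne A := by
  classical
  have hsymm : ∀ a b : A, dist a b ≤ 1 → dist b a ≤ 1 := fun a b h => by rwa [dist_comm]
  have htrans : ∀ a b c : A, dist a b ≤ 1 → dist b c ≤ 1 → dist a c ≤ 1 :=
    fun a b c h1 h2 => le_trans (hultra a b c) (max_le h1 h2)
  letI s : Setoid A := ⟨fun a b => dist a b ≤ 1,
    ⟨fun a => by simp, fun {a b} h => hsymm a b h, fun {a b c} h1 h2 => htrans a b c h1 h2⟩⟩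
  have hBeq : ∀ a b : A, dist a b ≤ 1 →
      Finset.univ.filter (fun c => dist b c ≤ 1) = Finset.univ.filter (fun c => dist a c ≤ 1) := by
    intro a b hab
    ext c
    simp only [Finset.mem_filter, Finset.mem_univ, true_and]
    exact ⟨fun h => htrans a b c hab h, fun h => htrans b a c (hsymm a b hab) h⟩
  have hcardpos : ∀ a : A, 0 < (Finset.univ.filter (fun c => dist a c ≤ 1)).card := by
    intro a
    exact Finset.card_pos.2 ⟨a, by simp⟩
  -- part (i)
  have part1 : ∀ a : A, ∑ b ∈ Finset.univ.filter (fun b => dist a b ≤ 1),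
      (1 : ℝ) / (Finset.univ.filter (fun c => dist b c ≤ 1)).card = 1 := by
    intro a
    have h1 : ∀ b ∈ Finset.univ.filter (fun b => dist a b ≤ 1),
        (1 : ℝ) / (Finset.univ.filter (fun c => dist b c ≤ 1)).card
          = 1 / (Finset.univ.filter (fun c => dist a c ≤ 1)).card := by
      intro b hb
      rw [hBeq a b (by simpa using hb)]
    rw [Finset.sum_congr rfl h1, Finset.sum_const, nsmul_eq_mul, mul_one_div, div_self]
    exact_mod_cast (hcardpos a).ne'
  -- fibers of the quotient map are exactly the balls
  have hfiber : ∀ a : A, Finset.univ.filter (fun b => Quotient.mk s b = Quotient.mk s a)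
      = Finset.univ.filter (fun b => dist a b ≤ 1) := by
    intro a
    ext b
    simp only [Finset.mem_filter, Finset.mem_univ, true_and, Quotient.eq]
    exact ⟨fun h => hsymm b a h, fun h => hsymm a b h⟩
  -- ultramagnitude equals the number of equivalence classes
  have hsum : ∑ a : A, (1 : ℝ) / (Finset.univ.filter (fun c => dist a c ≤ 1)).card
      = Fintype.card (Quotient s) := by
    rw [← Finset.sum_fiberwise Finset.univ (Quotient.mk s)
      (fun a => (1 : ℝ) / (Finset.univ.filter (fun c => dist a c ≤ 1)).card)]
    rw [Fintype.card, Finset.card_eq_sum_ones, Nat.cast_sum]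
    refine Finset.sum_congr rfl fun q _ => ?_
    induction q using Quotient.ind with
    | _ a =>
      push_cast
      rw [hfiber a]
      exact part1 a
  -- covering number equals the number of equivalence classes
  have hdistout : ∀ a : A, dist a (Quotient.mk s a).out ≤ 1 := by
    intro a
    have := Quotient.mk_out (s := s) a
    exact hsymm _ _ this
  have hcover : coveringNumberOne A = Fintype.card (Quotient s) := by
    have hmem : Fintype.card (Quotient s) ∈
        {m : ℕ | ∃ t : Finset A, t.card = m ∧ ∀ a : A, ∃ c ∈ t, dist a c ≤ 1} := by
      refine ⟨Finset.univ.image (fun q : Quotient s => q.out), ?_, ?_⟩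
      · rw [Finset.card_image_of_injective _ Quotient.out_injective, Finset.card_univ]
      · intro a
        exact ⟨(Quotient.mk s a).out, Finset.mem_image_of_mem _ (Finset.mem_univ _),
          hdistout a⟩
    refine le_antisymm (Nat.sInf_le hmem) (le_csInf ⟨_, hmem⟩ ?_)
    rintro m ⟨t, ht, hcov⟩
    have hsub : (Finset.univ : Finset (Quotient s)) ⊆ t.image (Quotient.mk s) := by
      intro q _
      induction q using Quotient.ind with
      | _ a =>
        obtain ⟨c, hc, hac⟩ := hcov a
        refine Finset.mem_image.2 ⟨c, hc, ?_⟩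
        exact Quotient.sound (hsymm a c hac)
    calc Fintype.card (Quotient s) = (Finset.univ : Finset (Quotient s)).card :=
          (Finset.card_univ).symm
      _ ≤ (t.image (Quotient.mk s)).card := Finset.card_le_card hsub
      _ ≤ t.card := Finset.card_image_le
      _ = m := ht
  -- packing number equals the number of equivalence classes
  have hdisj : ∀ x y : A, ¬ dist x y ≤ 1 →
      Disjoint (Metric.closedBall x 1) (Metric.closedBall y 1) := by
    intro x y hxy
    rw [Set.disjoint_left]
    intro z hz hz'
    rw [Metric.mem_closedBall] at hz hz'
    exact hxy (htrans x z y (hsymm z x hz) hz')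
  have hpack : packingNumberOne A = Fintype.card (Quotient s) := by
    have hmem : Fintype.card (Quotient s) ∈
        {m : ℕ | ∃ x : Fin m → A, Pairwise fun j k =>
          Disjoint (Metric.closedBall (x j) 1) (Metric.closedBall (x k) 1)} := by
      refine ⟨fun j => ((Fintype.equivFin (Quotient s)).symm j).out, ?_⟩
      intro j k hjk
      apply hdisj
      intro hle
      apply hjk
      have : ((Fintype.equivFin (Quotient s)).symm j) = ((Fintype.equivFin (Quotient s)).symm k) := by
        rw [← Quotient.out_eq ((Fintype.equivFin (Quotient s)).symm j),
          ← Quotient.out_eq ((Fintype.equivFin (Quotient s)).symm k)]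
        exact Quotient.sound hle
      exact (Fintype.equivFin (Quotient s)).symm.injective this
    have hbdd : ∀ m ∈ {m : ℕ | ∃ x : Fin m → A, Pairwise fun j k =>
        Disjoint (Metric.closedBall (x j) 1) (Metric.closedBall (x k) 1)},
        m ≤ Fintype.card (Quotient s) := by
      rintro m ⟨x, hx⟩
      have hinj : Function.Injective (fun j : Fin m => Quotient.mk s (x j)) := by
        intro j k hjk
        by_contra hne
        have hle : dist (x j) (x k) ≤ 1 := Quotient.exact hjk
        have := Set.disjoint_left.1 (hx hne)
        exact this (Metric.mem_closedBall_self (by norm_num))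
          (by rw [Metric.mem_closedBall]; exact hle)
      simpa using Fintype.card_le_of_injective _ hinj
    exact le_antisymm (csSup_le ⟨_, hmem⟩ hbdd)
      (le_csSup ⟨_, hbdd⟩ hmem)
  refine ⟨part1, ?_, hcover.trans hpack.symm⟩
  rw [hcover]
  exact hsum
end
end
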